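/- arXiv:1111.3093 — 5 statements merged into one kernel-verified Lean document; each statement's English description precedes it below -/
import Mathlib

section
/- Let p be a prime and let f : ℤ_p → ℤ_p be a 1-Lipschitz function. Then f preserves the normalized Haar probability measure μ_p on ℤ_p (i.e., μ_p(f⁻¹(S)) = μ_p(S) for every measurable S ⊆ ℤ_p) if and only if f is bijective modulo p^k for every k ≥ 1. -/
open MeasureTheory

/-- The map induced by `f : ℤ_[p] → ℤ_[p]` on `ℤ/p^kℤ` (for 1-Lipschitz `f` this is the
well-defined reduction of `f` modulo `p^k`). -/
noncomputable def inducedMod {p : ℕ} [Fact p.Prime] (f : ℤ_[p] → ℤ_[p]) (k : ℕ) :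
    ZMod (p ^ k) → ZMod (p ^ k) :=
  fun z => PadicInt.toZModPow k (f ((z.val : ℤ_[p])))

namespace MeasPresAux

variable {p : ℕ} [hp : Fact p.Prime]

lemma toZModPow_eq_iff (k : ℕ) (x a : ℤ_[p]) :
    PadicInt.toZModPow k x = PadicInt.toZModPow k a ↔ ‖x - a‖ ≤ (p : ℝ) ^ (-(k : ℤ)) := by
  rw [PadicInt.norm_le_pow_iff_mem_span_pow, ← PadicInt.ker_toZModPow, RingHom.mem_ker,
    map_sub, sub_eq_zero]

lemma ball_eq_fiber (k : ℕ) (a : ℤ_[p]) :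
    {x : ℤ_[p] | ‖x - a‖ ≤ (p : ℝ) ^ (-(k : ℤ))} =
      PadicInt.toZModPow k ⁻¹' {PadicInt.toZModPow k a} := by
  ext x
  simp [toZModPow_eq_iff k x a]

lemma toZModPow_natCast_val (k : ℕ) (c : ZMod (p ^ k)) :
    PadicInt.toZModPow k ((c.val : ℕ) : ℤ_[p]) = c := by
  haveI : NeZero (p ^ k) := ⟨pow_ne_zero k hp.out.ne_zero⟩
  rw [map_natCast]
  exact ZMod.natCast_rightInverse c

lemma fiber_eq_ball (k : ℕ) (c : ZMod (p ^ k)) :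
    PadicInt.toZModPow k ⁻¹' {c} =
      {x : ℤ_[p] | ‖x - ((c.val : ℕ) : ℤ_[p])‖ ≤ (p : ℝ) ^ (-(k : ℤ))} := by
  rw [ball_eq_fiber, toZModPow_natCast_val]

lemma fiber_measurableSet [MeasurableSpace ℤ_[p]] [BorelSpace ℤ_[p]]
    (k : ℕ) (c : ZMod (p ^ k)) :
    MeasurableSet (PadicInt.toZModPow k ⁻¹' {c} : Set ℤ_[p]) := by
  rw [fiber_eq_ball]
  have : {x : ℤ_[p] | ‖x - ((c.val : ℕ) : ℤ_[p])‖ ≤ (p : ℝ) ^ (-(k : ℤ))} =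
      Metric.closedBall ((c.val : ℕ) : ℤ_[p]) ((p : ℝ) ^ (-(k : ℤ))) := by
    ext x; simp [Metric.mem_closedBall, dist_eq_norm]
  rw [this]
  exact measurableSet_closedBall

lemma key (f : ℤ_[p] → ℤ_[p]) (hf : ∀ a b : ℤ_[p], ‖f a - f b‖ ≤ ‖a - b‖)
    (k : ℕ) (x : ℤ_[p]) :
    PadicInt.toZModPow k (f x) = inducedMod f k (PadicInt.toZModPow k x) := by
  unfold inducedMod
  rw [toZModPow_eq_iff]
  refine le_trans (hf _ _) ?_
  rw [← toZModPow_eq_iff]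
  exact (toZModPow_natCast_val k _).symm

lemma preimage_fiber (f : ℤ_[p] → ℤ_[p]) (hf : ∀ a b : ℤ_[p], ‖f a - f b‖ ≤ ‖a - b‖)
    (k : ℕ) (T : Set (ZMod (p ^ k))) :
    f ⁻¹' (PadicInt.toZModPow k ⁻¹' T) =
      PadicInt.toZModPow k ⁻¹' (inducedMod f k ⁻¹' T) := by
  ext x
  simp [key f hf k x]

lemma fiber_subset_fiber {k l : ℕ} (hkl : k ≤ l) (c : ZMod (p ^ k)) (d : ZMod (p ^ l))
    (hx : ((PadicInt.toZModPow k ⁻¹' {c} : Set ℤ_[p]) ∩ PadicInt.toZModPow l ⁻¹' {d}).Nonempty) :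
    (PadicInt.toZModPow l ⁻¹' {d} : Set ℤ_[p]) ⊆ PadicInt.toZModPow k ⁻¹' {c} := by
  obtain ⟨x, hxc, hxd⟩ := hx
  simp only [Set.mem_preimage, Set.mem_singleton_iff] at hxc hxd
  intro y hy
  simp only [Set.mem_preimage, Set.mem_singleton_iff] at hy ⊢
  have h1 : PadicInt.toZModPow l y = PadicInt.toZModPow l x := by rw [hy, hxd]
  rw [toZModPow_eq_iff] at h1
  have h2 : ‖y - x‖ ≤ (p : ℝ) ^ (-(k : ℤ)) :=
    h1.trans (zpow_le_zpow_right₀ (by exact_mod_cast hp.out.one_lt.le) (by omega))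
  rw [← hxc, toZModPow_eq_iff]
  exact h2

lemma iUnion_measurable {X : Type*} {m : MeasurableSpace X} {g : ℕ × ℕ → Set X}
    (h : ∀ q, MeasurableSet[m] (g q)) : MeasurableSet[m] (⋃ q, g q) := by
  letI := m
  exact MeasurableSet.iUnion h

end MeasPresAux

/-- A 1-Lipschitz function `f : ℤ_p → ℤ_p` preserves the normalized Haar probability measure
`μ_p` (which assigns measure `p^{-k}` to every ball `a + p^k ℤ_p`) if and only if `f` is
bijective modulo `p^k` for every `k ≥ 1`. -/
theorem measurePreserving_iff_bijective_mod
    (p : ℕ) [Fact p.Prime] [MeasurableSpace ℤ_[p]] [BorelSpace ℤ_[p]]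
    (μ : Measure ℤ_[p])
    (hμ : ∀ (a : ℤ_[p]) (k : ℕ),
      μ {x : ℤ_[p] | ‖x - a‖ ≤ (p : ℝ) ^ (-(k : ℤ))} = ((p : ENNReal) ^ k)⁻¹)
    (f : ℤ_[p] → ℤ_[p]) (hf : ∀ a b : ℤ_[p], ‖f a - f b‖ ≤ ‖a - b‖) :
    (∀ S : Set ℤ_[p], MeasurableSet S → μ (f ⁻¹' S) = μ S) ↔
      ∀ k : ℕ, 1 ≤ k → Function.Bijective (inducedMod f k) := by
  classical
  have hμ' : ∀ (k : ℕ) (c : ZMod (p ^ k)),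
      μ (PadicInt.toZModPow k ⁻¹' {c}) = ((p : ENNReal) ^ k)⁻¹ := by
    intro k c
    rw [MeasPresAux.fiber_eq_ball]
    exact hμ _ k
  have hppos : (p : ENNReal) ≠ 0 := by
    exact_mod_cast (Fact.out (p := p.Prime)).ne_zero
  have hinv_ne_top : ∀ k : ℕ, ((p : ENNReal) ^ k)⁻¹ ≠ ⊤ :=
    fun k => ENNReal.inv_ne_top.mpr (pow_ne_zero k hppos)
  have hinv_ne_zero : ∀ k : ℕ, ((p : ENNReal) ^ k)⁻¹ ≠ 0 :=
    fun k => ENNReal.inv_ne_zero.mpr (ENNReal.pow_ne_top (ENNReal.natCast_ne_top p))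
  constructor
  · intro hpres k _
    refine Finite.injective_iff_bijective.mp ?_
    intro z1 z2 hz
    by_contra hne
    set c := inducedMod f k z1 with hc
    have hsub : (PadicInt.toZModPow k ⁻¹' {z1} : Set ℤ_[p]) ∪ PadicInt.toZModPow k ⁻¹' {z2}
        ⊆ f ⁻¹' (PadicInt.toZModPow k ⁻¹' {c}) := by
      rw [MeasPresAux.preimage_fiber f hf]
      rintro x (hx | hx) <;>
          simp only [Set.mem_preimage, Set.mem_singleton_iff] at hx ⊢
      · rw [hx, ← hc]
      · rw [hx, ← hz]
    have hdisj : Disjoint (PadicInt.toZModPow k ⁻¹' {z1} : Set ℤ_[p])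
        (PadicInt.toZModPow k ⁻¹' {z2}) :=
      Disjoint.preimage _ (Set.disjoint_singleton.mpr hne)
    have hμc : μ (f ⁻¹' (PadicInt.toZModPow k ⁻¹' {c})) = ((p : ENNReal) ^ k)⁻¹ := by
      rw [hpres _ (MeasPresAux.fiber_measurableSet k c), hμ' k c]
    have hle : μ ((PadicInt.toZModPow k ⁻¹' {z1} : Set ℤ_[p]) ∪ PadicInt.toZModPow k ⁻¹' {z2})
        ≤ ((p : ENNReal) ^ k)⁻¹ := hμc ▸ measure_mono hsub
    rw [measure_union hdisj (MeasPresAux.fiber_measurableSet k z2), hμ' k z1, hμ' k z2] at hle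
    exact absurd hle (not_le.mpr (ENNReal.lt_add_right (hinv_ne_top k) (hinv_ne_zero k)))
  · intro hbij
    have hbij' : ∀ k, Function.Bijective (inducedMod f k) := by
      intro k
      rcases Nat.eq_zero_or_pos k with rfl | hk
      · haveI : Subsingleton (ZMod (p ^ 0)) := by rw [pow_zero]; infer_instance
        exact ⟨fun a b _ => Subsingleton.elim a b, fun c => ⟨c, Subsingleton.elim _ _⟩⟩
      · exact hbij k hk
    have hlip : LipschitzWith 1 f := LipschitzWith.of_dist_le_mul fun a b => by
      simpa [dist_eq_norm] using hf a b
    have hfm : Measurable f := hlip.continuous.measurable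
    set C : Set (Set ℤ_[p]) :=
      {s | ∃ (k : ℕ) (c : ZMod (p ^ k)), s = PadicInt.toZModPow k ⁻¹' {c}} with hCdef
    have hCmeas : ∀ s ∈ C, MeasurableSet s := by
      rintro s ⟨k, c, rfl⟩; exact MeasPresAux.fiber_measurableSet k c
    have hgen : (inferInstance : MeasurableSpace ℤ_[p]) = MeasurableSpace.generateFrom C := by
      refine le_antisymm ?_ (MeasurableSpace.generateFrom_le hCmeas)
      rw [BorelSpace.measurable_eq (α := ℤ_[p])]
      refine MeasurableSpace.generateFrom_le fun U hU => ?_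
      have hU' : IsOpen U := hU
      have hUeq : U = ⋃ q : ℕ × ℕ,
          if (PadicInt.toZModPow q.1 ⁻¹' {(q.2 : ZMod (p ^ q.1))} : Set ℤ_[p]) ⊆ U
          then PadicInt.toZModPow q.1 ⁻¹' {(q.2 : ZMod (p ^ q.1))} else ∅ := by
        apply Set.Subset.antisymm
        · intro x hx
          obtain ⟨ε, hε, hball⟩ := Metric.isOpen_iff.mp hU' x hx
          obtain ⟨k, hk⟩ := PadicInt.exists_pow_neg_lt p hε
          set c := PadicInt.toZModPow k x with hcdef
          have hcv : ((c.val : ℕ) : ZMod (p ^ k)) = c := by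
            haveI : NeZero (p ^ k) := ⟨pow_ne_zero k (Fact.out (p := p.Prime)).ne_zero⟩
            exact ZMod.natCast_rightInverse c
          have hfib : (PadicInt.toZModPow k ⁻¹' {c} : Set ℤ_[p]) ⊆ U := by
            intro y hy
            apply hball
            simp only [Set.mem_preimage, Set.mem_singleton_iff] at hy
            rw [Metric.mem_ball, dist_eq_norm]
            exact lt_of_le_of_lt ((MeasPresAux.toZModPow_eq_iff k y x).mp hy) hk
          refine Set.mem_iUnion.mpr ⟨(k, c.val), ?_⟩
          rw [if_pos (by rw [hcv]; exact hfib)]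
          simp only [Set.mem_preimage, Set.mem_singleton_iff, hcv]
          exact hcdef.symm
        · intro x hx
          obtain ⟨q, hq⟩ := Set.mem_iUnion.mp hx
          by_cases h : (PadicInt.toZModPow q.1 ⁻¹' {(q.2 : ZMod (p ^ q.1))} : Set ℤ_[p]) ⊆ U
          · rw [if_pos h] at hq; exact h hq
          · rw [if_neg h] at hq; exact absurd hq (Set.notMem_empty x)
      rw [hUeq]
      refine MeasPresAux.iUnion_measurable fun q => ?_
      split_ifs
      · exact MeasurableSpace.measurableSet_generateFrom ⟨q.1, _, rfl⟩
      · exact (MeasurableSpace.generateFrom C).measurableSet_empty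
    have hpi : IsPiSystem C := by
      rintro s ⟨k, c, rfl⟩ t ⟨l, d, rfl⟩ hne
      rcases le_total k l with h | h
      · rw [Set.inter_eq_self_of_subset_right (MeasPresAux.fiber_subset_fiber h c d hne)]
        exact ⟨l, d, rfl⟩
      · rw [Set.inter_comm] at hne ⊢
        rw [Set.inter_eq_self_of_subset_right (MeasPresAux.fiber_subset_fiber h d c hne)]
        exact ⟨k, c, rfl⟩
    have huniv : μ Set.univ = 1 := by
      have h0 := hμ 0 0
      have he : {x : ℤ_[p] | ‖x - 0‖ ≤ (p : ℝ) ^ (-((0 : ℕ) : ℤ))} = Set.univ := by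
        ext x
        simp [PadicInt.norm_le_one]
      rw [he] at h0
      simpa using h0
    haveI : IsFiniteMeasure μ := ⟨by rw [huniv]; exact ENNReal.one_lt_top⟩
    haveI : IsFiniteMeasure (μ.map f) :=
      ⟨by rw [Measure.map_apply hfm MeasurableSet.univ, Set.preimage_univ, huniv]
          exact ENNReal.one_lt_top⟩
    have hmap : μ.map f = μ := by
      refine MeasureTheory.ext_of_generate_finite C hgen hpi ?_ ?_
      · rintro s ⟨k, c, rfl⟩
        rw [Measure.map_apply hfm (MeasPresAux.fiber_measurableSet k c),
          MeasPresAux.preimage_fiber f hf]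
        obtain ⟨b, hb⟩ := (hbij' k).surjective c
        have hsing : (inducedMod f k ⁻¹' {c} : Set (ZMod (p ^ k))) = {b} := by
          ext z
          simp only [Set.mem_preimage, Set.mem_singleton_iff]
          constructor
          · intro hz; exact (hbij' k).injective (hz.trans hb.symm)
          · rintro rfl; exact hb
        rw [hsing, hμ' k b, hμ' k c]
      · rw [Measure.map_apply hfm MeasurableSet.univ, Set.preimage_univ]
    intro S hS
    rw [← Measure.map_apply hfm hS, hmap]
end

section
/- Let p be a prime and let f : ℤ_p → ℤ_p be a 1-Lipschitz function. Then f is ergodic with respect to the normalized Haar probability measure μ_p on ℤ_p (i.e., f preserves μ_p and every measurable S ⊆ ℤ_p with f⁻¹(S) = S satisfies μ_p(S) ∈ {0, 1}) if and only if f is transitive modulo p^k for every k ≥ 1. -/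
set_option linter.unusedSectionVars false


open MeasureTheory

namespace ErgAux

variable {p : ℕ} [Fact p.Prime]

lemma cast_val_toZModPow (k : ℕ) (c : ZMod (p ^ k)) :
    PadicInt.toZModPow k ((c.val : ℤ_[p])) = c := by
  haveI : NeZero (p ^ k) := ⟨pow_ne_zero k (Fact.out : p.Prime).ne_zero⟩
  rw [map_natCast, ZMod.natCast_zmod_val]

lemma norm_sub_le_iff (k : ℕ) (x y : ℤ_[p]) :
    ‖x - y‖ ≤ (p : ℝ) ^ (-(k : ℤ)) ↔ PadicInt.toZModPow k x = PadicInt.toZModPow k y := by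
  rw [PadicInt.norm_le_pow_iff_mem_span_pow, ← PadicInt.ker_toZModPow, RingHom.mem_ker,
    map_sub, sub_eq_zero]

/-- level-k ball -/
def pball (k : ℕ) (c : ZMod (p ^ k)) : Set ℤ_[p] := PadicInt.toZModPow k ⁻¹' {c}

lemma pball_eq (k : ℕ) (c : ZMod (p ^ k)) :
    pball k c = {x : ℤ_[p] | ‖x - (c.val : ℤ_[p])‖ ≤ (p : ℝ) ^ (-(k : ℤ))} := by
  ext x
  simp only [pball, Set.mem_preimage, Set.mem_singleton_iff, Set.mem_setOf_eq,
    norm_sub_le_iff, cast_val_toZModPow]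

lemma measurableSet_pball [MeasurableSpace ℤ_[p]] [BorelSpace ℤ_[p]] (k : ℕ)
    (c : ZMod (p ^ k)) : MeasurableSet (pball k c) := by
  have : pball k c = Metric.closedBall ((c.val : ℤ_[p])) ((p : ℝ) ^ (-(k : ℤ))) := by
    rw [pball_eq]; ext x; simp [Metric.mem_closedBall, dist_eq_norm]
  rw [this]; exact measurableSet_closedBall

lemma toZModPow_f (f : ℤ_[p] → ℤ_[p]) (hf : ∀ a b : ℤ_[p], ‖f a - f b‖ ≤ ‖a - b‖)
    (k : ℕ) (x : ℤ_[p]) :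
    PadicInt.toZModPow k (f x) = inducedMod f k (PadicInt.toZModPow k x) := by
  apply (norm_sub_le_iff k _ _).1
  refine (hf x _).trans ((norm_sub_le_iff k _ _).2 ?_)
  rw [cast_val_toZModPow]

lemma preimage_pball (f : ℤ_[p] → ℤ_[p]) (hf : ∀ a b : ℤ_[p], ‖f a - f b‖ ≤ ‖a - b‖)
    (k : ℕ) (c : ZMod (p ^ k)) :
    f ⁻¹' pball k c = PadicInt.toZModPow k ⁻¹' ((inducedMod f k) ⁻¹' {c}) := by
  ext x
  simp [pball, toZModPow_f f hf k x]

lemma inducedMod_compat (f : ℤ_[p] → ℤ_[p]) (hf : ∀ a b : ℤ_[p], ‖f a - f b‖ ≤ ‖a - b‖)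
    (k : ℕ) (z : ZMod (p ^ (k + 1))) :
    ZMod.castHom (pow_dvd_pow p (Nat.le_succ k)) (ZMod (p ^ k)) (inducedMod f (k + 1) z)
      = inducedMod f k (ZMod.castHom (pow_dvd_pow p (Nat.le_succ k)) (ZMod (p ^ k)) z) := by
  have h1 : ∀ w : ℤ_[p], ZMod.castHom (pow_dvd_pow p (Nat.le_succ k)) (ZMod (p ^ k))
      (PadicInt.toZModPow (k + 1) w) = PadicInt.toZModPow k w := by
    intro w
    have := PadicInt.zmod_cast_comp_toZModPow (p := p) k (k + 1) (Nat.le_succ k)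
    exact congrFun (congrArg (fun g => g.toFun) this) w
  show ZMod.castHom _ _ (PadicInt.toZModPow (k+1) (f _)) = PadicInt.toZModPow k (f _)
  rw [h1]
  apply (norm_sub_le_iff k _ _).1
  refine (hf _ _).trans ((norm_sub_le_iff k _ _).2 ?_)
  rw [cast_val_toZModPow]
  haveI : NeZero (p ^ (k+1)) := ⟨pow_ne_zero _ (Fact.out : p.Prime).ne_zero⟩
  rw [map_natCast, ZMod.castHom_apply, ZMod.natCast_val]


section Orbit

lemma surjective_of_orbit {α : Type*} (g : α → α) (x0 : α)
    (hcov : ∀ z, ∃ n, g^[n] x0 = z) (m : ℕ) (hm : 1 ≤ m) (hret : g^[m] x0 = x0) :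
    Function.Surjective g := by
  intro z
  obtain ⟨n, hn⟩ := hcov z
  cases n with
  | zero =>
    refine ⟨g^[m-1] x0, ?_⟩
    show g^[1] (g^[m-1] x0) = z
    rw [← Function.iterate_add_apply, Nat.add_sub_cancel' hm, hret]
    exact hn
  | succ n =>
    refine ⟨g^[n] x0, ?_⟩
    show g^[1] (g^[n] x0) = z
    rw [← Function.iterate_add_apply, Nat.add_comm 1 n]
    exact hn

lemma reach_of_orbit {α : Type*} (g : α → α) (x0 : α)
    (hcov : ∀ z, ∃ n, g^[n] x0 = z) (m : ℕ) (hm : 1 ≤ m) (hret : g^[m] x0 = x0)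
    (a b : α) : ∃ n, g^[n] a = b := by
  obtain ⟨s, hs⟩ := hcov a
  obtain ⟨t, ht⟩ := hcov b
  have hper : ∀ c : ℕ, g^[c * m] x0 = x0 := by
    intro c
    induction c with
    | zero => simp
    | succ c ih =>
      rw [Nat.succ_mul, Function.iterate_add_apply, hret, ih]
  have hsm : s ≤ s * m := Nat.le_mul_of_pos_right s hm
  refine ⟨t + s * m - s, ?_⟩
  have hadd : (t + s * m - s) + s = t + s * m := Nat.sub_add_cancel (le_trans hsm (Nat.le_add_left _ _))
  rw [← hs, ← Function.iterate_add_apply, hadd, Function.iterate_add_apply, hper, ht]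

lemma exists_return (f : ℤ_[p] → ℤ_[p]) (hf : ∀ a b : ℤ_[p], ‖f a - f b‖ ≤ ‖a - b‖) (k : ℕ)
    (hcov : ∀ z : ZMod (p ^ (k + 1)), ∃ n, (inducedMod f (k + 1))^[n] 0 = z) :
    ∃ m, 1 ≤ m ∧ (inducedMod f k)^[m] 0 = 0 := by
  haveI : NeZero (p ^ (k + 1)) := ⟨pow_ne_zero _ (Fact.out : p.Prime).ne_zero⟩
  have hp1 : 1 < p := (Fact.out : p.Prime).one_lt
  set π : ZMod (p ^ (k + 1)) →+* ZMod (p ^ k) :=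
    ZMod.castHom (pow_dvd_pow p (Nat.le_succ k)) (ZMod (p ^ k)) with hπ
  have hcomm : ∀ (n : ℕ) (z : ZMod (p ^ (k + 1))),
      π ((inducedMod f (k + 1))^[n] z) = (inducedMod f k)^[n] (π z) := by
    intro n
    induction n with
    | zero => intro z; simp
    | succ n ih =>
      intro z
      rw [Function.iterate_succ_apply', Function.iterate_succ_apply', hπ,
        inducedMod_compat f hf, ← hπ, ih]
  obtain ⟨n, hn⟩ := hcov ((p ^ k : ℕ) : ZMod (p ^ (k + 1)))
  have hne : ((p ^ k : ℕ) : ZMod (p ^ (k + 1))) ≠ 0 := by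
    intro h
    rw [ZMod.natCast_eq_zero_iff] at h
    have hdvd := h
    exact absurd (Nat.le_of_dvd (pow_pos (lt_trans one_pos hp1) k) hdvd)
      (not_le.2 (pow_lt_pow_right₀ hp1 (Nat.lt_succ_self k)))
  have hn1 : 1 ≤ n := by
    rcases Nat.eq_zero_or_pos n with h0 | h; · exact absurd (by simpa [h0] using hn.symm) hne
    · exact h
  refine ⟨n, hn1, ?_⟩
  have h2 := hcomm n 0
  rw [hn, map_zero] at h2
  rw [← h2, hπ, ZMod.castHom_apply, ZMod.cast_natCast (pow_dvd_pow p (Nat.le_succ k)),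
    ZMod.natCast_self]

end Orbit

section Meas

variable [MeasurableSpace ℤ_[p]] [BorelSpace ℤ_[p]]

/-- the collection of all balls -/
def ballSet (p : ℕ) [Fact p.Prime] : Set (Set ℤ_[p]) :=
  {B | ∃ k : ℕ, ∃ c : ZMod (p ^ k), B = pball k c}

lemma pball_subset {k j : ℕ} (hkj : k ≤ j) (c : ZMod (p ^ k)) (d : ZMod (p ^ j))
    (h : ZMod.castHom (pow_dvd_pow p hkj) (ZMod (p ^ k)) d = c) :
    pball j d ⊆ pball k c := by
  intro x hx
  have hx' : PadicInt.toZModPow j x = d := hx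
  show PadicInt.toZModPow k x = c
  rw [← PadicInt.cast_toZModPow k j hkj x, hx', ← h, ZMod.castHom_apply]

lemma pball_disjoint {k : ℕ} {c d : ZMod (p ^ k)} (h : c ≠ d) :
    Disjoint (pball (p := p) k c) (pball k d) := by
  rw [Set.disjoint_left]
  intro x hc hd
  exact h ((Eq.symm hc).trans hd)

lemma iUnion_pball (k : ℕ) : ⋃ c : ZMod (p ^ k), pball (p := p) k c = Set.univ := by
  ext x
  simp only [Set.mem_iUnion, Set.mem_univ, iff_true]
  exact ⟨PadicInt.toZModPow k x, rfl⟩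

lemma isPiSystem_ballSet : IsPiSystem (ballSet p) := by
  rintro s ⟨k, c, rfl⟩ t ⟨j, d, rfl⟩ ⟨x, hxs, hxt⟩
  have hc : PadicInt.toZModPow k x = c := hxs
  have hd : PadicInt.toZModPow j x = d := hxt
  rcases le_total k j with hkj | hjk
  · have hsub : pball j d ⊆ pball (p := p) k c := by
      refine pball_subset hkj c d ?_
      rw [ZMod.castHom_apply, ← hd, PadicInt.cast_toZModPow k j hkj x, hc]
    rw [Set.inter_eq_self_of_subset_right hsub]
    exact ⟨j, d, rfl⟩
  · have hsub : pball k c ⊆ pball (p := p) j d := by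
      refine pball_subset hjk d c ?_
      rw [ZMod.castHom_apply, ← hc, PadicInt.cast_toZModPow j k hjk x, hd]
    rw [Set.inter_eq_self_of_subset_left hsub]
    exact ⟨k, c, rfl⟩

lemma countable_ballSet : (ballSet p).Countable := by
  have : ballSet p = ⋃ k : ℕ, Set.range (pball (p := p) k) := by
    ext B
    simp only [ballSet, Set.mem_setOf_eq, Set.mem_iUnion, Set.mem_range]
    constructor
    · rintro ⟨k, c, rfl⟩; exact ⟨k, c, rfl⟩
    · rintro ⟨k, c, rfl⟩; exact ⟨k, c, rfl⟩
  rw [this]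
  refine Set.countable_iUnion fun k => ?_
  haveI : NeZero (p ^ k) := ⟨pow_ne_zero _ (Fact.out : p.Prime).ne_zero⟩
  exact Set.countable_range _

lemma generateFrom_ballSet :
    ‹MeasurableSpace ℤ_[p]› = MeasurableSpace.generateFrom (ballSet p) := by
  refine le_antisymm ?_ (MeasurableSpace.generateFrom_le ?_)
  · rw [‹BorelSpace ℤ_[p]›.measurable_eq]
    show MeasurableSpace.generateFrom {s : Set ℤ_[p] | IsOpen s} ≤ _
    refine MeasurableSpace.generateFrom_le fun U hU => ?_
    replace hU : IsOpen U := hU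
    have hUeq : U = ⋃₀ {B | B ∈ ballSet p ∧ B ⊆ U} := by
      apply Set.Subset.antisymm
      · intro x hx
        obtain ⟨ε, hε, hball⟩ := Metric.isOpen_iff.1 hU x hx
        obtain ⟨k, hk⟩ := PadicInt.exists_pow_neg_lt p hε
        refine Set.mem_sUnion.2 ⟨pball k (PadicInt.toZModPow k x), ⟨⟨k, _, rfl⟩, ?_⟩, rfl⟩
        intro y hy
        apply hball
        rw [Metric.mem_ball, dist_eq_norm]
        calc ‖y - x‖ ≤ (p : ℝ) ^ (-(k : ℤ)) := (norm_sub_le_iff k y x).2 hy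
        _ < ε := hk
      · rintro x ⟨B, ⟨_, hBU⟩, hxB⟩
        exact hBU hxB
    rw [hUeq]
    refine MeasurableSet.sUnion (countable_ballSet.mono fun B hB => hB.1) ?_
    rintro B ⟨hB, _⟩
    exact MeasurableSpace.measurableSet_generateFrom hB
  · rintro B ⟨k, c, rfl⟩
    exact measurableSet_pball k c

variable (μ : Measure ℤ_[p])
variable (hμ : ∀ (a : ℤ_[p]) (k : ℕ),
      μ {x : ℤ_[p] | ‖x - a‖ ≤ (p : ℝ) ^ (-(k : ℤ))} = ((p : ENNReal) ^ k)⁻¹)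

include hμ

lemma measure_pball (k : ℕ) (c : ZMod (p ^ k)) :
    μ (pball k c) = ((p : ENNReal) ^ k)⁻¹ := by
  rw [pball_eq]
  exact hμ _ k

lemma isProb : IsProbabilityMeasure μ := by
  constructor
  have h := hμ 0 0
  have hset : {x : ℤ_[p] | ‖x - 0‖ ≤ (p : ℝ) ^ (-(0 : ℕ) : ℤ)} = Set.univ := by
    ext x
    simp only [Set.mem_setOf_eq, Set.mem_univ, iff_true, sub_zero, Nat.cast_zero, neg_zero,
      zpow_zero]
    exact PadicInt.norm_le_one x
  rw [hset] at h
  simpa using h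

omit hμ in
lemma measure_inter_pball_sum (k : ℕ) (S : Set ℤ_[p]) (hS : MeasurableSet S) :
    ∑' c : ZMod (p ^ k), μ (S ∩ pball k c) = μ S := by
  haveI : NeZero (p ^ k) := ⟨pow_ne_zero _ (Fact.out : p.Prime).ne_zero⟩
  rw [← measure_iUnion (fun c d hcd => (pball_disjoint hcd).mono
      Set.inter_subset_right Set.inter_subset_right)
      (fun c => hS.inter (measurableSet_pball k c))]
  rw [← Set.inter_iUnion, iUnion_pball, Set.inter_univ]

end Meas

end ErgAux

open ErgAux

/-- A 1-Lipschitz function `f : ℤ_p → ℤ_p` is ergodic with respect to the normalized Haar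
probability measure `μ_p` (which assigns measure `p^{-k}` to every ball `a + p^k ℤ_p`), i.e.
`f` preserves `μ_p` and every measurable `S` with `f ⁻¹' S = S` has measure `0` or `1`,
if and only if `f` is transitive modulo `p^k` for every `k ≥ 1` (i.e. the orbit of `0` under
the induced map on `ℤ/p^kℤ` is everything). -/
theorem ergodic_iff_transitive_mod
    (p : ℕ) [Fact p.Prime] [MeasurableSpace ℤ_[p]] [BorelSpace ℤ_[p]]
    (μ : Measure ℤ_[p])
    (hμ : ∀ (a : ℤ_[p]) (k : ℕ),
      μ {x : ℤ_[p] | ‖x - a‖ ≤ (p : ℝ) ^ (-(k : ℤ))} = ((p : ENNReal) ^ k)⁻¹)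
    (f : ℤ_[p] → ℤ_[p]) (hf : ∀ a b : ℤ_[p], ‖f a - f b‖ ≤ ‖a - b‖) :
    ((∀ S : Set ℤ_[p], MeasurableSet S → μ (f ⁻¹' S) = μ S) ∧
      (∀ S : Set ℤ_[p], MeasurableSet S → f ⁻¹' S = S → μ S = 0 ∨ μ S = 1)) ↔
      ∀ k : ℕ, 1 ≤ k →
        ∀ z : ZMod (p ^ k), ∃ n : ℕ, (inducedMod f k)^[n] 0 = z := by
  classical
  haveI hprob : IsProbabilityMeasure μ := ErgAux.isProb μ hμ
  have hμball : ∀ (k : ℕ) (c : ZMod (p ^ k)), μ (pball k c) = ((p : ENNReal) ^ k)⁻¹ :=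
    fun k c => ErgAux.measure_pball μ hμ k c
  have hmeasball : ∀ (k : ℕ) (c : ZMod (p ^ k)), MeasurableSet (pball k c) :=
    fun k c => ErgAux.measurableSet_pball k c
  have hfc : Continuous f := by
    have hl : LipschitzWith 1 f := LipschitzWith.of_dist_le_mul (fun a b => by
      rw [dist_eq_norm, dist_eq_norm, NNReal.coe_one, one_mul]; exact hf a b)
    exact hl.continuous
  have hfm : Measurable f := hfc.measurable
  have hp0 : (p : ENNReal) ≠ 0 := by
    exact_mod_cast (Fact.out : p.Prime).ne_zero
  have hppow : ∀ k : ℕ, ((p : ENNReal) ^ k) ≠ 0 := fun k => pow_ne_zero _ hp0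
  have hppowtop : ∀ k : ℕ, ((p : ENNReal) ^ k) ≠ ⊤ :=
    fun k => ENNReal.pow_ne_top (ENNReal.natCast_ne_top p)
  have hinv0 : ∀ k : ℕ, ((p : ENNReal) ^ k)⁻¹ ≠ 0 := fun k => ENNReal.inv_ne_zero.2 (hppowtop k)
  have hinvtop : ∀ k : ℕ, ((p : ENNReal) ^ k)⁻¹ ≠ ⊤ := fun k => ENNReal.inv_ne_top.2 (hppow k)
  have hNZ : ∀ k : ℕ, NeZero (p ^ k) := fun k => ⟨pow_ne_zero _ (Fact.out : p.Prime).ne_zero⟩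
  constructor
  · rintro ⟨hpre, herg⟩ k hk z
    haveI := hNZ k
    set g := inducedMod f k with hg
    -- g is injective
    have hginj : Function.Injective g := by
      intro b b' hbb
      by_contra hne
      have hsub : pball k b ∪ pball k b' ⊆ f ⁻¹' pball k (g b) := by
        rw [ErgAux.preimage_pball f hf]
        rintro x (hx | hx)
        · exact Set.mem_singleton_iff.2 (congrArg g hx)
        · exact Set.mem_singleton_iff.2 ((congrArg g hx).trans hbb.symm)
      have h2 : μ (pball k b ∪ pball k b') = ((p : ENNReal) ^ k)⁻¹ + ((p : ENNReal) ^ k)⁻¹ := by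
        rw [measure_union (pball_disjoint hne) (hmeasball k b'), hμball, hμball]
      have h3 : μ (f ⁻¹' pball k (g b)) = ((p : ENNReal) ^ k)⁻¹ := by
        rw [hpre _ (hmeasball _ _), hμball]
      have h4 : ((p : ENNReal) ^ k)⁻¹ + ((p : ENNReal) ^ k)⁻¹ ≤ ((p : ENNReal) ^ k)⁻¹ := by
        rw [← h2, ← h3]; exact measure_mono hsub
      exact absurd h4 (not_le.2 (ENNReal.lt_add_right (hinvtop k) (hinv0 k)))
    -- orbit and invariant set
    set O : Set (ZMod (p ^ k)) := {w | ∃ n, g^[n] 0 = w} with hO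
    have hgO : g '' O ⊆ O := by
      rintro _ ⟨w, ⟨n, rfl⟩, rfl⟩
      exact ⟨n + 1, Function.iterate_succ_apply' g n 0⟩
    have hgOeq : g '' O = O :=
      Set.eq_of_subset_of_ncard_le hgO
        (le_of_eq (Set.ncard_image_of_injective O hginj).symm) (Set.toFinite O)
    have hpreO : g ⁻¹' O = O := by
      conv_lhs => rw [← hgOeq]
      exact Set.preimage_image_eq O hginj
    set S : Set ℤ_[p] := PadicInt.toZModPow k ⁻¹' O with hSdef
    have hSeq : S = ⋃ w : O, pball k (w : ZMod (p ^ k)) := by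
      ext x
      simp only [hSdef, Set.mem_preimage, Set.mem_iUnion]
      constructor
      · intro hx; exact ⟨⟨_, hx⟩, rfl⟩
      · rintro ⟨w, hw⟩
        have : PadicInt.toZModPow k x = (w : ZMod (p ^ k)) := hw
        rw [this]; exact w.2
    have hSmeas : MeasurableSet S := by
      rw [hSeq]
      exact MeasurableSet.iUnion fun w => hmeasball k w
    have hfS : f ⁻¹' S = S := by
      ext x
      show PadicInt.toZModPow k (f x) ∈ O ↔ PadicInt.toZModPow k x ∈ O
      rw [ErgAux.toZModPow_f f hf k x, ← Set.mem_preimage, hpreO]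
    have hmuS : μ S = 1 := by
      rcases herg S hSmeas hfS with h0 | h1
      · exfalso
        have hball0 : pball k (0 : ZMod (p ^ k)) ⊆ S := by
          intro x hx
          show PadicInt.toZModPow k x ∈ O
          rw [show PadicInt.toZModPow k x = 0 from hx]
          exact ⟨0, rfl⟩
        have : μ (pball k (0 : ZMod (p ^ k))) ≤ μ S := measure_mono hball0
        rw [hμball, h0] at this
        exact hinv0 k (le_antisymm this zero_le)
      · exact h1
    by_contra hz
    have hzO : z ∉ O := fun h => hz (by exact h)
    have hball : pball k z ⊆ Sᶜ := by
      intro x hx hxS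
      exact hzO (by rw [← show PadicInt.toZModPow k x = z from hx]; exact hxS)
    have hcompl : μ Sᶜ = 0 := by
      rw [measure_compl hSmeas (measure_ne_top μ S), hmuS, measure_univ, tsub_self]
    have : μ (pball k z) ≤ μ Sᶜ := measure_mono hball
    rw [hμball, hcompl] at this
    exact hinv0 k (le_antisymm this zero_le)
  · intro htrans
    have hcov : ∀ k : ℕ, ∀ z : ZMod (p ^ k), ∃ n, (inducedMod f k)^[n] 0 = z := by
      intro k
      cases k with
      | zero =>
        haveI : Subsingleton (ZMod (p ^ 0)) := by rw [pow_zero]; infer_instance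
        intro z; exact ⟨0, Subsingleton.elim _ _⟩
      | succ k => exact htrans (k + 1) (Nat.le_add_left 1 k)
    have hret : ∀ k : ℕ, ∃ m, 1 ≤ m ∧ (inducedMod f k)^[m] 0 = 0 :=
      fun k => ErgAux.exists_return f hf k (hcov (k + 1))
    have hsurj : ∀ k : ℕ, Function.Surjective (inducedMod f k) := by
      intro k
      obtain ⟨m, hm1, hm⟩ := hret k
      exact ErgAux.surjective_of_orbit _ 0 (hcov k) m hm1 hm
    have hinj : ∀ k : ℕ, Function.Injective (inducedMod f k) := by
      intro k
      haveI := hNZ k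
      exact Finite.injective_iff_surjective.2 (hsurj k)
    have hreach : ∀ k : ℕ, ∀ a b : ZMod (p ^ k), ∃ n, (inducedMod f k)^[n] a = b := by
      intro k
      obtain ⟨m, hm1, hm⟩ := hret k
      exact ErgAux.reach_of_orbit _ 0 (hcov k) m hm1 hm
    have hpreball : ∀ k : ℕ, ∀ c : ZMod (p ^ k),
        ∃ b, inducedMod f k b = c ∧ f ⁻¹' pball k c = pball k b := by
      intro k c
      obtain ⟨b, hb⟩ := hsurj k c
      refine ⟨b, hb, ?_⟩
      rw [ErgAux.preimage_pball f hf]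
      have hpe : (inducedMod f k) ⁻¹' {c} = {b} := by
        ext w
        simp only [Set.mem_preimage, Set.mem_singleton_iff]
        constructor
        · intro hw; exact hinj k (hw.trans hb.symm)
        · rintro rfl; exact hb
      rw [hpe]; rfl
    have hpre : ∀ S : Set ℤ_[p], MeasurableSet S → μ (f ⁻¹' S) = μ S := by
      have hmap : μ.map f = μ := by
        haveI : IsProbabilityMeasure (μ.map f) := Measure.isProbabilityMeasure_map hfm.aemeasurable
        refine MeasureTheory.ext_of_generate_finite (ballSet p) generateFrom_ballSet
          isPiSystem_ballSet ?_ ?_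
        · rintro B ⟨k, c, rfl⟩
          rw [Measure.map_apply hfm (hmeasball k c)]
          obtain ⟨b, hb, hpb⟩ := hpreball k c
          rw [hpb, hμball, hμball]
        · simp [measure_univ]
      intro S hS
      rw [← Measure.map_apply hfm hS, hmap]
    refine ⟨hpre, ?_⟩
    intro S hS hfS
    have hconst : ∀ k : ℕ, ∀ c d : ZMod (p ^ k), μ (S ∩ pball k c) = μ (S ∩ pball k d) := by
      intro k c d
      have step : ∀ c : ZMod (p ^ k),
          μ (S ∩ pball k c) = μ (S ∩ pball k (inducedMod f k c)) := by
        intro c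
        have hpb : f ⁻¹' pball k (inducedMod f k c) = pball k c := by
          obtain ⟨b, hb, hpb⟩ := hpreball k (inducedMod f k c)
          rw [hpb, hinj k hb]
        calc μ (S ∩ pball k c) = μ (f ⁻¹' (S ∩ pball k (inducedMod f k c))) := by
              rw [Set.preimage_inter, hfS, hpb]
        _ = μ (S ∩ pball k (inducedMod f k c)) := hpre _ (hS.inter (hmeasball _ _))
      have iter : ∀ n : ℕ, ∀ c : ZMod (p ^ k),
          μ (S ∩ pball k c) = μ (S ∩ pball k ((inducedMod f k)^[n] c)) := by
        intro n
        induction n with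
        | zero => intro c; rfl
        | succ n ih =>
          intro c
          rw [Function.iterate_succ_apply', ← step, ih]
      obtain ⟨n, hn⟩ := hreach k c d
      rw [iter n c, hn]
    have hval : ∀ k : ℕ, ∀ c : ZMod (p ^ k),
        μ (S ∩ pball k c) = μ S * ((p : ENNReal) ^ k)⁻¹ := by
      intro k c
      haveI := hNZ k
      have hsum := ErgAux.measure_inter_pball_sum μ k S hS
      rw [tsum_fintype] at hsum
      rw [Finset.sum_congr rfl (fun d _ => hconst k d c), Finset.sum_const, Finset.card_univ,
        ZMod.card, nsmul_eq_mul] at hsum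
      have hcast : ((p ^ k : ℕ) : ENNReal) = (p : ENNReal) ^ k := by push_cast; rfl
      rw [hcast] at hsum
      rw [← hsum, mul_comm ((p : ENNReal) ^ k), mul_assoc,
        ENNReal.mul_inv_cancel (hppow k) (hppowtop k), mul_one]
    have h2 : μ.restrict S = (μ S) • μ := by
      refine MeasureTheory.ext_of_generate_finite (ballSet p) generateFrom_ballSet
        isPiSystem_ballSet ?_ ?_
      · rintro B ⟨k, c, rfl⟩
        rw [Measure.restrict_apply (hmeasball k c), Measure.smul_apply, smul_eq_mul,
          Set.inter_comm, hval k c, hμball]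
      · rw [Measure.restrict_apply_univ, Measure.smul_apply, smul_eq_mul, measure_univ, mul_one]
    have hSS : μ S = μ S * μ S := by
      have := congrArg (fun ν : Measure ℤ_[p] => ν S) h2
      simpa [Measure.restrict_apply hS, Set.inter_self, Measure.smul_apply, smul_eq_mul]
        using this
    rcases eq_or_ne (μ S) 0 with h0 | h0
    · exact Or.inl h0
    · refine Or.inr ?_
      have hmul : μ S * 1 = μ S * μ S := by rw [mul_one]; exact hSS
      exact ((ENNReal.mul_right_inj h0 (measure_ne_top μ S)).1 hmul).symm
end

section
/- Let p be a prime, let n ≥ m ≥ 1, and let F : ℤ_p^n → ℤ_p^m be a function which is 1-Lipschitz with respect to the maximum p-adic metric (i.e., the maximum over coordinates of |F(a)_j − F(b)_j|_p is at most the maximum over coordinates of |a_i − b_i|_p). Then F is measure-preserving from (ℤ_p^n, μ_p^n) to (ℤ_p^m, μ_p^m) (i.e., μ_p^n(F⁻¹(S)) = μ_p^m(S) for every measurable S ⊆ ℤ_p^m) if and only if for every k ≥ 1 the induced map (ℤ/p^kℤ)^n → (ℤ/p^kℤ)^m is balanced, i.e., every point of (ℤ/p^kℤ)^m has exactly p^{k(n−m)}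 preimages. -/
open MeasureTheory

variable {p : ℕ} [Fact p.Prime]

lemma lemA (k : ℕ) (a b : ℤ_[p]) :
    PadicInt.toZModPow k a = PadicInt.toZModPow k b ↔ ‖a - b‖ ≤ (p : ℝ) ^ (-(k : ℤ)) := by
  rw [PadicInt.norm_le_pow_iff_mem_span_pow, ← PadicInt.ker_toZModPow, RingHom.mem_ker,
    map_sub, sub_eq_zero]

lemma lemLift (k : ℕ) (c : ZMod (p ^ k)) :
    PadicInt.toZModPow k ((c.val : ℤ_[p])) = c := by
  rw [map_natCast, ZMod.natCast_zmod_val]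

/-- residue class as set -/
noncomputable def cls (k : ℕ) (c : ZMod (p ^ k)) : Set ℤ_[p] := {x | PadicInt.toZModPow k x = c}

lemma cls_eq_ball (k : ℕ) (c : ZMod (p ^ k)) :
    cls k c = {x : ℤ_[p] | ‖x - (c.val : ℤ_[p])‖ ≤ (p : ℝ) ^ (-(k : ℤ))} := by
  ext x
  simp only [cls, Set.mem_setOf_eq, ← lemA, lemLift]

variable [MeasurableSpace ℤ_[p]] [BorelSpace ℤ_[p]]

lemma cls_measurable (k : ℕ) (c : ZMod (p ^ k)) : MeasurableSet (cls k c) := by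
  rw [cls_eq_ball]
  exact (isClosed_le (by continuity) continuous_const).measurableSet

lemma cls_measure (μ : Measure ℤ_[p])
    (hμ : ∀ (a : ℤ_[p]) (k : ℕ),
      μ {x : ℤ_[p] | ‖x - a‖ ≤ (p : ℝ) ^ (-(k : ℤ))} = ((p : ENNReal) ^ k)⁻¹)
    (k : ℕ) (c : ZMod (p ^ k)) : μ (cls k c) = ((p : ENNReal) ^ k)⁻¹ := by
  rw [cls_eq_ball]; exact hμ _ k

lemma prob (μ : Measure ℤ_[p])
    (hμ : ∀ (a : ℤ_[p]) (k : ℕ),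
      μ {x : ℤ_[p] | ‖x - a‖ ≤ (p : ℝ) ^ (-(k : ℤ))} = ((p : ENNReal) ^ k)⁻¹) :
    IsProbabilityMeasure μ := by
  constructor
  have := hμ 0 0
  simp only [pow_zero, inv_one, Nat.cast_ofNat] at this
  rw [← this]
  congr 1
  ext x
  simp [PadicInt.norm_le_one]

variable {N : ℕ}

/-- box: product of residue classes -/
def box (k : ℕ) (y : Fin N → ZMod (p ^ k)) : Set (Fin N → ℤ_[p]) :=
  Set.pi Set.univ fun i => cls k (y i)

lemma box_measurable (k : ℕ) (y : Fin N → ZMod (p ^ k)) : MeasurableSet (box k y) :=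
  MeasurableSet.univ_pi fun i => cls_measurable k (y i)

lemma mem_box {k : ℕ} {y : Fin N → ZMod (p ^ k)} {a : Fin N → ℤ_[p]} :
    a ∈ box k y ↔ ∀ i, PadicInt.toZModPow k (a i) = y i := by
  simp [box, cls, Set.mem_pi]

lemma box_measure (μ : Measure ℤ_[p])
    (hμ : ∀ (a : ℤ_[p]) (k : ℕ),
      μ {x : ℤ_[p] | ‖x - a‖ ≤ (p : ℝ) ^ (-(k : ℤ))} = ((p : ENNReal) ^ k)⁻¹)
    (k : ℕ) (y : Fin N → ZMod (p ^ k)) :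
    Measure.pi (fun _ : Fin N => μ) (box k y) = (((p : ENNReal) ^ k)⁻¹) ^ N := by
  haveI := prob μ hμ
  rw [box, Measure.pi_pi]
  simp [cls_measure μ hμ]

/-- the reduction map -/
noncomputable def red (k : ℕ) (a : Fin N → ℤ_[p]) : Fin N → ZMod (p ^ k) :=
  fun i => PadicInt.toZModPow k (a i)

lemma red_preim_singleton (k : ℕ) (x : Fin N → ZMod (p ^ k)) :
    red k ⁻¹' {x} = box (p := p) k x := by
  ext a; simp [red, mem_box, funext_iff]

lemma red_measurable (k : ℕ) : ∀ A : Set (Fin N → ZMod (p ^ k)),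
    MeasurableSet (red (p := p) k ⁻¹' A) := by
  intro A
  have : red (p := p) (N := N) k ⁻¹' A = ⋃ x ∈ A, red k ⁻¹' {x} := by
    ext a; simp [Set.Finite.mem_toFinset]
  rw [this]
  exact MeasurableSet.biUnion A.to_countable
    fun x _ => (red_preim_singleton k x) ▸ box_measurable k x

/-- measure of preimage of a set of residues -/
lemma red_measure (μ : Measure ℤ_[p])
    (hμ : ∀ (a : ℤ_[p]) (k : ℕ),
      μ {x : ℤ_[p] | ‖x - a‖ ≤ (p : ℝ) ^ (-(k : ℤ))} = ((p : ENNReal) ^ k)⁻¹)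
    (k : ℕ) (A : Set (Fin N → ZMod (p ^ k))) :
    Measure.pi (fun _ : Fin N => μ) (red (p := p) k ⁻¹' A)
      = A.toFinite.toFinset.card * (((p : ENNReal) ^ k)⁻¹) ^ N := by
  classical
  have hA : red (p := p) (N := N) k ⁻¹' A = ⋃ x ∈ A.toFinite.toFinset, red k ⁻¹' {x} := by
    ext a; simp [Set.Finite.mem_toFinset]
  rw [hA, measure_biUnion_finset]
  · simp only [red_preim_singleton, box_measure μ hμ]
    rw [Finset.sum_const, nsmul_eq_mul]
  · intro x _ x' _ hxx'
    simp only [red_preim_singleton]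
    refine Set.disjoint_left.2 fun a ha ha' => hxx' ?_
    funext i
    rw [← (mem_box.1 ha i), (mem_box.1 ha' i)]
  · exact fun x _ => (red_preim_singleton k x) ▸ box_measurable k x

/-- lift of residue vector -/
noncomputable def liftv (k : ℕ) (x : Fin N → ZMod (p ^ k)) : Fin N → ℤ_[p] := fun i => ((x i).val : ℤ_[p])

lemma red_liftv (k : ℕ) (x : Fin N → ZMod (p ^ k)) : red (p := p) k (liftv k x) = x := by
  funext i; exact lemLift k (x i)

section key
variable {n m : ℕ} (hm : 1 ≤ m) (hnm : m ≤ n)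
    (F : (Fin n → ℤ_[p]) → (Fin m → ℤ_[p]))
    (hF : ∀ (a b : Fin n → ℤ_[p]) (j : Fin m), ‖F a j - F b j‖ ≤ ⨆ i, ‖a i - b i‖)

include hm hnm hF

lemma key (k : ℕ) (a : Fin n → ℤ_[p]) (j : Fin m) :
    PadicInt.toZModPow k (F a j) = PadicInt.toZModPow k (F (liftv k (red k a)) j) := by
  haveI : Nonempty (Fin n) := Fin.pos_iff_nonempty.1 (lt_of_lt_of_le hm hnm)
  rw [lemA]
  refine (hF a _ j).trans (ciSup_le fun i => ?_)
  rw [← lemA]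
  exact (congrFun (red_liftv k (red k a)) i).symm

/-- F-preimage of a box is a red-preimage -/
lemma preim_box (k : ℕ) (y : Fin m → ZMod (p ^ k)) :
    F ⁻¹' box k y = red (p := p) k ⁻¹'
      {x : Fin n → ZMod (p ^ k) | ∀ j, PadicInt.toZModPow k (F (liftv k x) j) = y j} := by
  ext a
  simp only [Set.mem_preimage, mem_box, Set.mem_setOf_eq]
  constructor
  · intro h j; rw [← key hm hnm F hF k a j]; exact h j
  · intro h j; rw [key hm hnm F hF k a j]; exact h j

end key

/-- every open set in ℤ_p is a union of a countable family of residue classes -/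
lemma open_eq_iUnion {U : Set ℤ_[p]} (hU : IsOpen U) :
    U = ⋃ q : {q : ℕ × ℕ // cls (p := p) q.1 ((q.2 : ZMod (p ^ q.1))) ⊆ U},
      cls q.1.1 ((q.1.2 : ZMod (p ^ q.1.1))) := by
  apply Set.Subset.antisymm
  · intro x hx
    obtain ⟨ε, hε, hball⟩ := Metric.isOpen_iff.1 hU x hx
    obtain ⟨k, hk⟩ := PadicInt.exists_pow_neg_lt p hε
    have hsub : cls (p := p) k (PadicInt.toZModPow k x) ⊆ U := by
      intro z hz
      apply hball
      rw [Metric.mem_ball, dist_eq_norm]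
      exact lt_of_le_of_lt ((lemA k z x).1 hz) hk
    have hval : (((PadicInt.toZModPow k x).val : ℕ) : ZMod (p ^ k)) = PadicInt.toZModPow k x :=
      ZMod.natCast_zmod_val _
    refine Set.mem_iUnion.2 ⟨⟨(k, (PadicInt.toZModPow k x).val), ?_⟩, ?_⟩
    · simpa [hval] using hsub
    · show x ∈ cls (p := p) k _
      rw [hval]; rfl
  · exact Set.iUnion_subset fun q => q.2

/-- the family of boxes -/
def boxes (N : ℕ) : Set (Set (Fin N → ℤ_[p])) :=
  {S | ∃ (k : ℕ) (y : Fin N → ZMod (p ^ k)), S = box k y}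

lemma isPiSystem_boxes : IsPiSystem (boxes (p := p) N) := by
  rintro S ⟨k, y, rfl⟩ T ⟨l, z, rfl⟩ hne
  rcases le_total k l with hkl | hkl
  · obtain ⟨a, ha, ha'⟩ := hne
    have hsub : box (p := p) l z ⊆ box k y := by
      intro b hb
      rw [mem_box] at *
      intro i
      rw [← ha i]
      rw [lemA]
      calc ‖b i - a i‖ ≤ (p:ℝ) ^ (-(l:ℤ)) := by
            rw [← lemA]; rw [ha' i, hb i]
        _ ≤ (p:ℝ) ^ (-(k:ℤ)) := by
            apply zpow_le_zpow_right₀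
            · exact_mod_cast (Fact.out : p.Prime).one_le
            · omega
    rw [Set.inter_eq_self_of_subset_right hsub]
    exact ⟨l, z, rfl⟩
  · obtain ⟨a, ha, ha'⟩ := hne
    have hsub : box (p := p) k y ⊆ box l z := by
      intro b hb
      rw [mem_box] at *
      intro i
      rw [← ha' i]
      rw [lemA]
      calc ‖b i - a i‖ ≤ (p:ℝ) ^ (-(k:ℤ)) := by
            rw [← lemA]; rw [ha i, hb i]
        _ ≤ (p:ℝ) ^ (-(l:ℤ)) := by
            apply zpow_le_zpow_right₀
            · exact_mod_cast (Fact.out : p.Prime).one_le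
            · omega
    rw [Set.inter_eq_self_of_subset_left hsub]
    exact ⟨k, y, rfl⟩

lemma eval_preim_cls (j : Fin N) (k : ℕ) (c : ZMod (p ^ k)) :
    (fun a : Fin N → ℤ_[p] => a j) ⁻¹' cls k c
      = ⋃ y : {y : Fin N → ZMod (p ^ k) // y j = c}, box k y.1 := by
  ext a
  simp only [Set.mem_preimage, Set.mem_iUnion]
  constructor
  · intro h
    exact ⟨⟨red k a, h⟩, mem_box.2 fun i => rfl⟩
  · rintro ⟨⟨y, hy⟩, hb⟩
    rw [show c = y j from hy.symm]
    exact mem_box.1 hb j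

lemma pi_eq_generateFrom' :
    (inferInstance : MeasurableSpace (Fin N → ℤ_[p]))
      = MeasurableSpace.generateFrom (boxes (p := p) N) := by
  apply le_antisymm
  · have hmem : ∀ (j : Fin N) (U : Set ℤ_[p]), IsOpen U →
        MeasurableSet[MeasurableSpace.generateFrom (boxes (p := p) N)]
          ((fun a : Fin N → ℤ_[p] => a j) ⁻¹' U) := by
      intro j U hU
      rw [open_eq_iUnion hU, Set.preimage_iUnion]
      refine MeasurableSet.iUnion fun q => ?_
      rw [eval_preim_cls]
      exact MeasurableSet.iUnion fun y =>
        MeasurableSpace.measurableSet_generateFrom ⟨_, y.1, rfl⟩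
    have hev : ∀ j : Fin N, @Measurable _ _ (MeasurableSpace.generateFrom (boxes (p := p) N)) _
        (fun a : Fin N → ℤ_[p] => a j) := by
      intro j
      rw [‹BorelSpace ℤ_[p]›.measurable_eq, borel]
      exact @measurable_generateFrom _ _ (MeasurableSpace.generateFrom (boxes (p := p) N)) _ _
        (fun U hU => hmem j U hU)
    exact iSup_le fun j => MeasurableSpace.comap_le_iff_le_map.2 <| (hev j)
  · apply MeasurableSpace.generateFrom_le
    rintro S ⟨k, y, rfl⟩
    exact box_measurable k y

lemma natCard_set {α : Type*} [Finite α] (s : Set α) :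
    Nat.card s = s.toFinite.toFinset.card := by
  rw [Nat.card_coe_set_eq, Set.ncard_eq_toFinset_card _ (Set.toFinite s)]

lemma enn_arith (hp : 1 < p) (k a b : ℕ) (hab : b ≤ a) :
    ((p : ENNReal) ^ (k * (a - b)) : ENNReal) * (((p : ENNReal) ^ k)⁻¹) ^ a
      = (((p : ENNReal) ^ k)⁻¹) ^ b := by
  have hp0 : (p : ENNReal) ≠ 0 := by positivity
  have hpt : (p : ENNReal) ≠ ⊤ := ENNReal.natCast_ne_top p
  have hsum : k * (a - b) + k * b = k * a := by
    rw [← Nat.mul_add, Nat.sub_add_cancel hab]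
  rw [← ENNReal.inv_pow, ← ENNReal.inv_pow, ← pow_mul, ← pow_mul, ← hsum, pow_add,
    ENNReal.mul_inv (Or.inl (pow_ne_zero _ hp0)) (Or.inl (ENNReal.pow_ne_top hpt)),
    ← mul_assoc, ENNReal.mul_inv_cancel (pow_ne_zero _ hp0) (ENNReal.pow_ne_top hpt), one_mul]

/-- A 1-Lipschitz (w.r.t. the maximum p-adic metric) map `F : ℤ_p^n → ℤ_p^m` with `n ≥ m ≥ 1`
preserves the Haar product measure (i.e. `μ_p^n (F⁻¹ S) = μ_p^m S` for every measurable `S`)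
if and only if for every `k ≥ 1` the induced map `(ℤ/p^kℤ)^n → (ℤ/p^kℤ)^m` is balanced:
every point has exactly `p^{k(n-m)}` preimages. -/
theorem measurePreserving_iff_balanced_mod
    (p : ℕ) [Fact p.Prime] [MeasurableSpace ℤ_[p]] [BorelSpace ℤ_[p]]
    (μ : Measure ℤ_[p])
    (hμ : ∀ (a : ℤ_[p]) (k : ℕ),
      μ {x : ℤ_[p] | ‖x - a‖ ≤ (p : ℝ) ^ (-(k : ℤ))} = ((p : ENNReal) ^ k)⁻¹)
    (n m : ℕ) (hm : 1 ≤ m) (hnm : m ≤ n)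
    (F : (Fin n → ℤ_[p]) → (Fin m → ℤ_[p]))
    (hF : ∀ (a b : Fin n → ℤ_[p]) (j : Fin m), ‖F a j - F b j‖ ≤ ⨆ i, ‖a i - b i‖) :
    (∀ S : Set (Fin m → ℤ_[p]), MeasurableSet S →
        Measure.pi (fun _ : Fin n => μ) (F ⁻¹' S) = Measure.pi (fun _ : Fin m => μ) S) ↔
      ∀ k : ℕ, 1 ≤ k → ∀ y : Fin m → ZMod (p ^ k),
        Nat.card {x : Fin n → ZMod (p ^ k) //
            (fun j => PadicInt.toZModPow k (F (fun i => ((x i).val : ℤ_[p])) j)) = y} =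
          p ^ (k * (n - m)) := by
  have hp1 : 1 < p := (Fact.out : p.Prime).one_lt
  have hp0 : (p : ENNReal) ≠ 0 := by positivity
  have hpt : (p : ENNReal) ≠ ⊤ := ENNReal.natCast_ne_top p
  haveI := prob μ hμ
  -- the preimage-residue set
  set A : ∀ k : ℕ, (Fin m → ZMod (p ^ k)) → Set (Fin n → ZMod (p ^ k)) :=
    fun k y => {x | ∀ j, PadicInt.toZModPow k (F (liftv k x) j) = y j} with hA
  have hcard : ∀ (k : ℕ) (y : Fin m → ZMod (p ^ k)),
      Nat.card {x : Fin n → ZMod (p ^ k) //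
          (fun j => PadicInt.toZModPow k (F (fun i => ((x i).val : ℤ_[p])) j)) = y}
        = (A k y).toFinite.toFinset.card := by
    intro k y
    rw [← natCard_set]
    apply Nat.card_congr
    exact Equiv.subtypeEquivRight fun x => by
      simp only [hA, Set.mem_setOf_eq, funext_iff]
      rfl
  have hmeas_box : ∀ (k : ℕ) (y : Fin m → ZMod (p ^ k)),
      Measure.pi (fun _ : Fin n => μ) (F ⁻¹' box k y)
        = ((A k y).toFinite.toFinset.card : ENNReal) * (((p : ENNReal) ^ k)⁻¹) ^ n := by
    intro k y
    rw [preim_box hm hnm F hF k y, red_measure μ hμ]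
  constructor
  · -- measure preserving → balanced
    intro h k hk y
    have h1 := h (box k y) (box_measurable k y)
    rw [hmeas_box k y, box_measure μ hμ] at h1
    rw [hcard k y]
    have h2 : ((A k y).toFinite.toFinset.card : ENNReal)
        = (p : ENNReal) ^ (k * (n - m)) := by
      have hcn : ((p : ENNReal) ^ k) ^ n ≠ 0 := pow_ne_zero _ (by positivity)
      have hct : ((p : ENNReal) ^ k) ^ n ≠ ⊤ :=
        ENNReal.pow_ne_top (ENNReal.pow_ne_top hpt)
      calc ((A k y).toFinite.toFinset.card : ENNReal)
          = ((A k y).toFinite.toFinset.card : ENNReal)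
            * ((((p : ENNReal) ^ k)⁻¹) ^ n * ((p : ENNReal) ^ k) ^ n) := by
            rw [← ENNReal.inv_pow, ENNReal.inv_mul_cancel hcn hct, mul_one]
        _ = (((p : ENNReal) ^ k)⁻¹) ^ m * ((p : ENNReal) ^ k) ^ n := by
            rw [← mul_assoc, h1]
        _ = (p : ENNReal) ^ (k * (n - m)) := by
            rw [← enn_arith hp1 k n m hnm, mul_assoc, ← ENNReal.inv_pow,
              ENNReal.inv_mul_cancel hcn hct, mul_one]
    have := h2
    rw [show ((p : ENNReal) ^ (k * (n - m))) = ((p ^ (k * (n - m)) : ℕ) : ENNReal) by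
      push_cast; ring] at this
    exact_mod_cast this
  · -- balanced → measure preserving
    intro hb S hS
    -- measurability of F
    have hFmeas : Measurable F := by
      rw [measurable_pi_iff]
      intro j
      apply measurable_of_isOpen
      intro U hU
      rw [open_eq_iUnion hU, Set.preimage_iUnion]
      refine MeasurableSet.iUnion fun q => ?_
      have : (fun a => F a j) ⁻¹' cls q.1.1 ((q.1.2 : ZMod (p ^ q.1.1)))
          = red (p := p) q.1.1 ⁻¹'
            {x | PadicInt.toZModPow q.1.1 (F (liftv q.1.1 x) j) = (q.1.2 : ZMod (p ^ q.1.1))} := by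
        ext a
        simp only [Set.mem_preimage, Set.mem_setOf_eq, cls]
        rw [key hm hnm F hF q.1.1 a j]
      rw [this]
      exact red_measurable _ _
    haveI : IsProbabilityMeasure (Measure.pi (fun _ : Fin n => μ)) := inferInstance
    have hmap : Measure.map F (Measure.pi fun _ : Fin n => μ)
        = Measure.pi (fun _ : Fin m => μ) := by
      haveI : IsProbabilityMeasure (Measure.map F (Measure.pi fun _ : Fin n => μ)) :=
        Measure.isProbabilityMeasure_map hFmeas.aemeasurable
      refine ext_of_generate_finite (boxes (p := p) m) (pi_eq_generateFrom')
        isPiSystem_boxes ?_ (by simp)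
      rintro S ⟨k, y, rfl⟩
      rw [Measure.map_apply hFmeas (box_measurable k y), hmeas_box k y,
        box_measure μ hμ]
      rcases Nat.eq_zero_or_pos k with rfl | hk
      · have : A 0 y = Set.univ := by
          haveI : Subsingleton (ZMod (p ^ 0)) := by
            simp only [pow_zero]; infer_instance
          ext x; simp only [hA, Set.mem_setOf_eq, Set.mem_univ, iff_true]
          intro j; exact Subsingleton.elim _ _
        rw [this]
        simp
      · have hN : (A k y).toFinite.toFinset.card = p ^ (k * (n - m)) := by
          rw [← hcard k y]; exact hb k hk y
        rw [hN]
        rw [show ((p ^ (k * (n - m)) : ℕ) : ENNReal) = (p : ENNReal) ^ (k * (n - m)) by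
          push_cast; ring]
        exact enn_arith hp1 k n m hnm
    rw [← hmap, Measure.map_apply hFmeas hS]
end

section
/- Let p be a prime and let f : ℤ_p → ℤ_p be the continuous function represented by a Mahler interpolation series f(x) = Σ_{i=0}^∞ a_i·C(x,i), where a_i ∈ ℤ_p and a_i → 0 p-adically. Then f is 1-Lipschitz (compatible) if and only if a_i ≡ 0 (mod p^{⌊log_p i⌋}) for all i ≥ 2, i.e., |a_i|_p ≤ p^{−⌊log_p i⌋} for all i ≥ 2. -/
open Filter

section MahlerCompatAux

open Finset IsUltrametricDist Polynomial
open scoped fwdDiff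

section aux
variable {p : ℕ} [hp : Fact p.Prime]

private lemma descPochhammer_smeval_succ' (x : ℤ_[p]) (j : ℕ) :
    (descPochhammer ℤ (j+1)).smeval x = x * (descPochhammer ℤ j).smeval (x - 1) := by
  rw [descPochhammer_succ_left]
  simp [smeval_mul, smeval_comp ℤ _ _ x, smeval_sub, smeval_X, smeval_one, npow_one]

private lemma succ_mul_choose_padic (x : ℤ_[p]) (j : ℕ) :
    ((j : ℤ_[p]) + 1) * Ring.choose x (j + 1) = x * Ring.choose (x - 1) j := by
  apply nsmul_right_injective (Nat.factorial_ne_zero (j + 1))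
  simp only
  rw [← mul_smul_comm, ← mul_smul_comm, ← Ring.descPochhammer_eq_factorial_smul_choose,
    descPochhammer_smeval_succ', Nat.factorial_succ, mul_smul,
    ← Ring.descPochhammer_eq_factorial_smul_choose, nsmul_eq_mul]
  push_cast
  ring

private lemma norm_natCast_padic (j : ℕ) (hj : j ≠ 0) :
    ‖(j : ℤ_[p])‖ = (p:ℝ) ^ (-(padicValNat p j : ℤ)) := by
  rw [show ‖(j : ℤ_[p])‖ = ‖((j : ℕ) : ℚ_[p])‖ from rfl,
    Padic.norm_eq_zpow_neg_valuation (by exact_mod_cast hj), Padic.valuation_natCast]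

/-- Norm bound for `C(d, j)`, `j ≥ 1`. -/
private lemma norm_choose_le (d : ℤ_[p]) {j : ℕ} (hj : j ≠ 0) :
    ‖Ring.choose d j‖ ≤ (p:ℝ) ^ (padicValNat p j : ℤ) * ‖d‖ := by
  obtain ⟨k, rfl⟩ := Nat.exists_eq_succ_of_ne_zero hj
  have h := succ_mul_choose_padic d k
  have hn : ‖((k : ℤ_[p]) + 1) * Ring.choose d (k + 1)‖ ≤ ‖d‖ := by
    rw [h, norm_mul]
    exact mul_le_of_le_one_right (norm_nonneg _) (PadicInt.norm_le_one _)
  rw [norm_mul] at hn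
  have hcast : ((k : ℤ_[p]) + 1) = ((k + 1 : ℕ) : ℤ_[p]) := by push_cast; ring
  rw [hcast, norm_natCast_padic _ (Nat.succ_ne_zero k)] at hn
  have hppos : (0:ℝ) < (p:ℝ) ^ (-(padicValNat p (k+1) : ℤ)) :=
    zpow_pos (by exact_mod_cast hp.out.pos) _
  calc ‖Ring.choose d (k+1)‖
      = ((p:ℝ) ^ (padicValNat p (k+1) : ℤ)) *
        ((p:ℝ) ^ (-(padicValNat p (k+1) : ℤ)) * ‖Ring.choose d (k+1)‖) := by
        rw [← mul_assoc, ← zpow_add₀ (by exact_mod_cast hp.out.pos.ne' : (p:ℝ) ≠ 0)]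
        simp
    _ ≤ (p:ℝ) ^ (padicValNat p (k+1) : ℤ) * ‖d‖ := by
        apply mul_le_mul_of_nonneg_left hn (zpow_nonneg (by positivity) _)

private lemma padicValNat_le_log {j : ℕ} (hj : j ≠ 0) : padicValNat p j ≤ Nat.log p j :=
  Nat.le_log_of_pow_le hp.out.one_lt (Nat.le_of_dvd (Nat.pos_of_ne_zero hj) pow_padicValNat_dvd)

/-- Lipschitz bound for `C(·, i)`: `‖C(x,i) - C(y,i)‖ ≤ p^{log_p i} ‖x - y‖`. -/
private lemma norm_choose_sub_choose_le (x y : ℤ_[p]) {i : ℕ} (hi : i ≠ 0) :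
    ‖Ring.choose x i - Ring.choose y i‖ ≤ (p:ℝ) ^ (Nat.log p i : ℤ) * ‖x - y‖ := by
  have hx : x = (x - y) + y := by ring
  have hmem : ((0 : ℕ), i) ∈ antidiagonal i := by simp
  have hsum := Ring.add_choose_eq (r := x - y) (s := y) i (Commute.all _ _)
  rw [← Finset.add_sum_erase _ _ hmem, Ring.choose_zero_right, one_mul] at hsum
  have hdiff : Ring.choose x i - Ring.choose y i =
      ∑ ij ∈ (antidiagonal i).erase (0, i), Ring.choose (x - y) ij.1 * Ring.choose y ij.2 := by
    rw [hx, hsum]; ring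
  rw [hdiff]
  apply norm_sum_le_of_forall_le_of_nonneg (by positivity)
  intro ij hij
  have hij1 : ij.1 ≠ 0 := by
    rcases Finset.mem_erase.mp hij with ⟨hne, hmem'⟩
    rintro h0
    apply hne
    have := Finset.HasAntidiagonal.mem_antidiagonal.mp hmem'
    rw [h0, zero_add] at this
    rw [Prod.ext_iff, h0, this]; exact ⟨rfl, rfl⟩
  have hij1le : ij.1 ≤ i := by
    have := Finset.HasAntidiagonal.mem_antidiagonal.mp (Finset.mem_erase.mp hij).2
    omega
  calc ‖Ring.choose (x - y) ij.1 * Ring.choose y ij.2‖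
      ≤ ‖Ring.choose (x - y) ij.1‖ := by
        rw [norm_mul]
        exact mul_le_of_le_one_right (norm_nonneg _) (PadicInt.norm_le_one _)
    _ ≤ (p:ℝ) ^ (padicValNat p ij.1 : ℤ) * ‖x - y‖ := norm_choose_le _ hij1
    _ ≤ (p:ℝ) ^ (Nat.log p i : ℤ) * ‖x - y‖ := by
        apply mul_le_mul_of_nonneg_right _ (norm_nonneg _)
        apply zpow_le_zpow_right₀ (by exact_mod_cast hp.out.one_le)
        exact_mod_cast (padicValNat_le_log hij1).trans (Nat.log_mono_right hij1le)

end aux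

section aux2
variable {p : ℕ} [hp : Fact p.Prime]


private lemma norm_fwdDiff_iter_le' (g : ℤ_[p] → ℤ_[p]) {C : ℝ} (hC : 0 ≤ C)
    (hg : ∀ z, ‖g z‖ ≤ C) (r : ℕ) (y : ℤ_[p]) : ‖Δ_[1] ^[r] g y‖ ≤ C := by
  rw [fwdDiff_iter_eq_sum_shift]
  exact norm_sum_le_of_forall_le_of_nonneg hC
    fun k _ => (IsUltrametricDist.norm_zsmul_le _ _).trans (hg _)

private lemma fwdDiff_iter_sub_shift (f : ℤ_[p] → ℤ_[p]) (c : ℤ_[p]) (r : ℕ) (y : ℤ_[p]) :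
    Δ_[1] ^[r] (fun x => f (x + c) - f x) y = Δ_[1] ^[r] f (y + c) - Δ_[1] ^[r] f y := by
  simp only [fwdDiff_iter_eq_sum_shift, smul_sub, Finset.sum_sub_distrib]
  congr 1
  refine Finset.sum_congr rfl fun k _ => ?_
  rw [add_right_comm]

/-- Main induction: if `f` is 1-Lipschitz then `‖Δ^[i] f y‖ ≤ p^{-log_p i}`. -/
private lemma norm_fwdDiff_le_of_lip (f : ℤ_[p] → ℤ_[p])
    (hf : ∀ x y : ℤ_[p], ‖f x - f y‖ ≤ ‖x - y‖) :
    ∀ i : ℕ, i ≠ 0 → ∀ y : ℤ_[p], ‖Δ_[1] ^[i] f y‖ ≤ (p:ℝ) ^ (-(Nat.log p i : ℤ)) := by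
  intro i
  induction i using Nat.strong_induction_on with
  | _ i IH =>
  intro hi y
  set m := Nat.log p i with hm
  set q := p ^ m with hqdef
  have hq1 : 1 ≤ q := Nat.one_le_pow _ _ hp.out.pos
  have hqi : q ≤ i := Nat.pow_log_le_self p hi
  set r := i - q with hr
  have hiqr : q + r = i := by omega
  have hppos : (0:ℝ) < p := by exact_mod_cast hp.out.pos
  have hp1R : (1:ℝ) ≤ p := by exact_mod_cast hp.out.one_le
  -- the key identity
  have key := shift_eq_sum_fwdDiff_iter (1 : ℤ_[p]) (Δ_[1] ^[r] f) q y
  simp only [← Function.iterate_add_apply] at key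
  rw [Finset.sum_range_succ, Nat.choose_self, one_smul,
    ← Finset.sum_erase_add (range q) _ (Finset.mem_range.mpr hq1)] at key
  rw [Nat.choose_zero_right, one_smul, zero_add] at key
  have keyr : Δ_[1] ^[q + r] f y = (Δ_[1] ^[r] f (y + q • 1) - Δ_[1] ^[r] f y)
      - ∑ x ∈ (range q).erase 0, q.choose x • Δ_[1] ^[x + r] f y := by
    simp only [nsmul_eq_mul, mul_one] at key ⊢
    linear_combination -key
  rw [hiqr] at keyr
  rw [keyr, sub_eq_add_neg]
  refine (IsUltrametricDist.norm_add_le_max _ _).trans (max_le ?_ ?_)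
  · -- the shifted-difference term
    rw [← fwdDiff_iter_sub_shift]
    refine norm_fwdDiff_iter_le' _ (by positivity) (fun z => ?_) _ _
    calc ‖f (z + q • 1) - f z‖ ≤ ‖z + q • 1 - z‖ := hf _ _
      _ = ‖((q:ℕ) : ℤ_[p])‖ := by rw [add_sub_cancel_left, nsmul_one]
      _ = (p:ℝ) ^ (-(m:ℤ)) := by
          rw [hqdef, Nat.cast_pow, PadicInt.norm_p_pow]
  · -- the sum term
    rw [norm_neg]
    refine norm_sum_le_of_forall_le_of_nonneg (by positivity) (fun x hx => ?_)
    obtain ⟨hx0, hxq⟩ : x ≠ 0 ∧ x < q := by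
      rcases Finset.mem_erase.mp hx with ⟨h1, h2⟩
      exact ⟨h1, Finset.mem_range.mp h2⟩
    set v := padicValNat p x with hv
    have hvx : v ≤ Nat.log p x := padicValNat_le_log hx0
    have hvm : v ≤ m := hvx.trans ((Nat.log_mono_right (by omega)).trans_eq hm.symm)
    -- divisibility of the binomial coefficient
    have hchoose : (p:ℕ) ^ (m - v) ∣ q.choose x := by
      have h1 := Nat.add_one_mul_choose_eq (q - 1) (x - 1)
      have e1 : (q - 1) + 1 = q := by omega
      have e2 : (x - 1) + 1 = x := by omega
      rw [e1, e2] at h1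
      have h2 : p ^ m ∣ q.choose x * x := by
        rw [← h1, hqdef]; exact dvd_mul_right _ _
      have hcx0 : q.choose x ≠ 0 := (Nat.choose_pos hxq.le).ne'
      have hval : m ≤ padicValNat p (q.choose x * x) := by
        rcases (padicValNat_dvd_iff m (q.choose x * x)).mp h2 with h | h
        · exact absurd h (by positivity)
        · exact h
      rw [padicValNat.mul hcx0 hx0] at hval
      exact dvd_trans (pow_dvd_pow p (by omega)) pow_padicValNat_dvd
    have hcnorm : ‖((q.choose x : ℕ) : ℤ_[p])‖ ≤ (p:ℝ) ^ (-((m - v : ℕ) : ℤ)) := by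
      have : ((p:ℤ)) ^ (m - v) ∣ ((q.choose x : ℕ) : ℤ) := by
        exact_mod_cast Int.natCast_dvd_natCast.mpr hchoose
      simpa using PadicInt.norm_int_le_pow_iff_dvd.mpr this
    have hIH : ‖Δ_[1] ^[x + r] f y‖ ≤ (p:ℝ) ^ (-(v:ℤ)) := by
      have hlt : x + r < i := by omega
      have hne : x + r ≠ 0 := by omega
      refine (IH _ hlt hne y).trans ?_
      apply zpow_le_zpow_right₀ hp1R
      have : v ≤ Nat.log p (x + r) := hvx.trans (Nat.log_mono_right (by omega))
      omega
    calc ‖q.choose x • Δ_[1] ^[x + r] f y‖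
        = ‖((q.choose x : ℕ) : ℤ_[p]) * Δ_[1] ^[x + r] f y‖ := by rw [nsmul_eq_mul]
      _ = ‖((q.choose x : ℕ) : ℤ_[p])‖ * ‖Δ_[1] ^[x + r] f y‖ := norm_mul _ _
      _ ≤ (p:ℝ) ^ (-((m - v : ℕ) : ℤ)) * (p:ℝ) ^ (-(v:ℤ)) := by
          exact mul_le_mul hcnorm hIH (norm_nonneg _) (by positivity)
      _ = (p:ℝ) ^ (-(m:ℤ)) := by
          rw [← zpow_add₀ hppos.ne']
          congr 1
          omega
end aux2

section aux3
variable {p : ℕ} [hp : Fact p.Prime]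

private instance : IsBoundedSMul ℤ_[p] ℚ_[p] :=
  IsBoundedSMul.of_norm_smul_le fun r x => by rw [Algebra.smul_def, norm_mul]; exact le_rfl

private lemma summable_mahler_series (a : ℕ → ℤ_[p]) (ha : Tendsto a atTop (nhds 0))
    (x : ℤ_[p]) : Summable (fun i => a i * Ring.choose x i) := by
  apply NonarchimedeanAddGroup.summable_of_tendsto_cofinite_zero
  rw [Nat.cofinite_eq_atTop]
  rw [tendsto_zero_iff_norm_tendsto_zero] at ha ⊢
  apply squeeze_zero (fun n => norm_nonneg _) (fun n => ?_) ha
  calc ‖a n * Ring.choose x n‖ = ‖a n‖ * ‖Ring.choose x n‖ := norm_mul _ _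
    _ ≤ ‖a n‖ := mul_le_of_le_one_right (norm_nonneg _) (PadicInt.norm_le_one _)

private lemma coeff_eq_fwdDiff (a : ℕ → ℤ_[p]) (ha : Tendsto a atTop (nhds 0))
    (f : ℤ_[p] → ℤ_[p]) (hf : ∀ x : ℤ_[p], f x = ∑' i : ℕ, a i * Ring.choose x i) (n : ℕ) :
    a n = Δ_[1] ^[n] f 0 := by
  set a' : ℕ → ℚ_[p] := fun i => (a i : ℚ_[p]) with ha'
  have hcont : Continuous (fun z : ℤ_[p] => (z : ℚ_[p])) := continuous_subtype_val
  have ha'0 : Tendsto a' atTop (nhds 0) := by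
    have := (hcont.tendsto (0 : ℤ_[p])).comp ha
    exact this
  have hfe : (fun x : ℤ_[p] => (f x : ℚ_[p])) = ⇑(PadicInt.mahlerSeries (p := p) a') := by
    funext x
    rw [hf x, PadicInt.mahlerSeries_apply ha'0 x]
    have hs := (summable_mahler_series a ha x).hasSum
    have hmap := hs.map (PadicInt.Coe.ringHom (p := p)).toAddMonoidHom hcont
    refine hmap.tsum_eq.symm.trans ?_
    apply tsum_congr fun i => ?_
    simp only [RingHom.toAddMonoidHom_eq_coe, Function.comp_apply, AddMonoidHom.coe_coe,
      PadicInt.Coe.ringHom, RingHom.coe_mk, MonoidHom.coe_mk, OneHom.coe_mk]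
    rw [mahler_apply, Algebra.smul_def, mul_comm]
    rfl
  have h1 : Δ_[1] ^[n] (fun x : ℤ_[p] => (f x : ℚ_[p])) 0 = a' n := by
    rw [hfe]; exact PadicInt.fwdDiff_mahlerSeries ha'0 n
  have h2 : Δ_[1] ^[n] (fun x : ℤ_[p] => (f x : ℚ_[p])) 0 = ((Δ_[1] ^[n] f 0 : ℤ_[p]) : ℚ_[p]) := by
    simp only [fwdDiff_iter_eq_sum_shift]
    have hcoe : ((∑ k ∈ Finset.range (n + 1), ((-1) ^ (n - k) * (n.choose k : ℤ)) • f (0 + k • 1) : ℤ_[p]) : ℚ_[p])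
        = ∑ k ∈ Finset.range (n + 1),
            ((((-1) ^ (n - k) * (n.choose k : ℤ)) • f (0 + k • 1) : ℤ_[p]) : ℚ_[p]) :=
      map_sum (PadicInt.Coe.ringHom (p := p)).toAddMonoidHom _ _
    rw [hcoe]
    refine Finset.sum_congr rfl fun k _ => ?_
    exact ((PadicInt.Coe.ringHom (p := p)).toAddMonoidHom.map_zsmul _ _).symm
  have h3 : ((a n : ℤ_[p]) : ℚ_[p]) = ((Δ_[1] ^[n] f 0 : ℤ_[p]) : ℚ_[p]) := h1.symm.trans h2
  exact Subtype.coe_injective h3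
end aux3

end MahlerCompatAux

open scoped fwdDiff

/-- **Compatibility criterion in terms of Mahler coefficients.** A continuous function
`f : ℤ_p → ℤ_p` given by a Mahler series `f x = Σ' i, a i * C(x, i)` (with `a i → 0`
p-adically; `C(x,i) = Ring.choose x i` is the `i`-th binomial coefficient polynomial) is
1-Lipschitz (compatible) if and only if `‖a i‖ ≤ p^{-⌊log_p i⌋}` for every `i ≥ 2`. -/
theorem mahler_compatibility_criterion
    (p : ℕ) [Fact p.Prime]
    (a : ℕ → ℤ_[p]) (ha : Tendsto a atTop (nhds 0))
    (f : ℤ_[p] → ℤ_[p]) (hf : ∀ x : ℤ_[p], f x = ∑' i : ℕ, a i * Ring.choose x i) :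
    (∀ x y : ℤ_[p], ‖f x - f y‖ ≤ ‖x - y‖) ↔
      ∀ i : ℕ, 2 ≤ i → ‖a i‖ ≤ (p : ℝ) ^ (-(Nat.log p i : ℤ)) := by
  constructor
  · intro hlip i hi
    rw [coeff_eq_fwdDiff a ha f hf i]
    exact norm_fwdDiff_le_of_lip f hlip i (by omega) 0
  · intro hbound x y
    have hppos : (0:ℝ) < p := by exact_mod_cast (Fact.out : p.Prime).pos
    rw [hf x, hf y,
      ← Summable.tsum_sub (summable_mahler_series a ha x) (summable_mahler_series a ha y)]
    apply IsUltrametricDist.norm_tsum_le_of_forall_le_of_nonneg (norm_nonneg _)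
    intro i
    match i with
    | 0 => simp [Ring.choose_zero_right]
    | 1 =>
      rw [Ring.choose_one_right, Ring.choose_one_right, ← mul_sub, norm_mul]
      exact mul_le_of_le_one_left (norm_nonneg _) (PadicInt.norm_le_one _)
    | (i + 2) =>
      rw [← mul_sub, norm_mul]
      calc ‖a (i + 2)‖ * ‖Ring.choose x (i + 2) - Ring.choose y (i + 2)‖
          ≤ (p:ℝ) ^ (-(Nat.log p (i + 2) : ℤ)) * ((p:ℝ) ^ (Nat.log p (i + 2) : ℤ) * ‖x - y‖) :=
            mul_le_mul (hbound _ (by omega)) (norm_choose_sub_choose_le x y (by omega))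
              (norm_nonneg _) (by positivity)
        _ = ‖x - y‖ := by
            rw [← mul_assoc, ← zpow_add₀ hppos.ne', neg_add_cancel, zpow_zero, one_mul]
end

section
/- Let p be a prime and let f : ℤ_p → ℤ_p be the continuous function represented by its van der Put series f(x) = Σ_{m=0}^∞ B_m·χ(m,x), where B_m ∈ ℤ_p and B_m → 0 p-adically. Then f is 1-Lipschitz (compatible) if and only if |B_m|_p ≤ p^{−⌊log_p m⌋} for all m = 0, 1, 2, …; equivalently, f is 1-Lipschitz if and only if it can be represented as f(x) = Σ_{m=0}^∞ p^{⌊log_p m⌋}·b_m·χ(m,x) for suitable b_m ∈ ℤ_p. -/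
open Filter

/-- The van der Put characteristic function `χ(m,·)`: the characteristic function (with values
in `{0,1} ⊆ ℤ_p`) of the ball `m + p^{⌊log_p m⌋+1}ℤ_p`, with the convention `⌊log_p 0⌋ = 0`. -/
noncomputable def vdpChi (p : ℕ) [Fact p.Prime] (m : ℕ) (x : ℤ_[p]) : ℤ_[p] :=
  if ‖x - (m : ℤ_[p])‖ ≤ (p : ℝ) ^ (-((Nat.log p m : ℤ) + 1)) then 1 else 0

namespace VdpAux
variable {p : ℕ} [hp : Fact p.Prime]

lemma chi_norm_le (m : ℕ) (x : ℤ_[p]) : ‖vdpChi p m x‖ ≤ 1 := PadicInt.norm_le_one _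

lemma chi_eq_of_close (m : ℕ) {a b : ℤ_[p]}
    (h : ‖a - b‖ ≤ (p : ℝ) ^ (-((Nat.log p m : ℤ) + 1))) :
    vdpChi p m a = vdpChi p m b := by
  unfold vdpChi
  congr 1
  apply propext
  constructor
  · intro ha
    calc ‖b - m‖ = ‖(b - a) + (a - m)‖ := by ring_nf
    _ ≤ max ‖b - a‖ ‖a - m‖ := PadicInt.nonarchimedean _ _
    _ ≤ _ := max_le (by rwa [norm_sub_rev] at h) ha
  · intro hb
    calc ‖a - m‖ = ‖(a - b) + (b - m)‖ := by ring_nf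
    _ ≤ max ‖a - b‖ ‖b - m‖ := PadicInt.nonarchimedean _ _
    _ ≤ _ := max_le h hb

lemma tendsto_bound :
    Tendsto (fun m : ℕ => (p : ℝ) ^ (-(Nat.log p m : ℤ))) atTop (nhds 0) := by
  have hp1 : 1 < p := hp.out.one_lt
  have hlog : Tendsto (fun m : ℕ => Nat.log p m) atTop atTop := by
    apply tendsto_atTop_atTop.2
    intro b
    exact ⟨p ^ b, fun a ha => by
      calc b = Nat.log p (p ^ b) := (Nat.log_pow hp1 b).symm
      _ ≤ Nat.log p a := Nat.log_mono_right ha⟩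
  have h2 : Tendsto (fun n : ℕ => ((p : ℝ)⁻¹) ^ n) atTop (nhds 0) := by
    apply tendsto_pow_atTop_nhds_zero_of_lt_one
    · positivity
    · rw [inv_lt_one_iff₀]; right; exact_mod_cast hp1
  have := h2.comp hlog
  convert this using 2 with m
  simp [zpow_neg, inv_pow]

lemma summable_term (C : ℕ → ℤ_[p]) (hC : Tendsto C atTop (nhds 0)) (x : ℤ_[p]) :
    Summable fun m => C m * vdpChi p m x := by
  apply NonarchimedeanAddGroup.summable_of_tendsto_cofinite_zero
  rw [Nat.cofinite_eq_atTop]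
  rw [tendsto_zero_iff_norm_tendsto_zero] at hC ⊢
  apply squeeze_zero (fun n => norm_nonneg _) (fun n => ?_) hC
  calc ‖C n * vdpChi p n x‖ = ‖C n‖ * ‖vdpChi p n x‖ := norm_mul _ _
  _ ≤ ‖C n‖ * 1 := by gcongr; exact chi_norm_le _ _
  _ = ‖C n‖ := mul_one _

lemma tendsto_of_bound (C : ℕ → ℤ_[p])
    (hC : ∀ m, ‖C m‖ ≤ (p : ℝ) ^ (-(Nat.log p m : ℤ))) :
    Tendsto C atTop (nhds 0) := by
  rw [tendsto_zero_iff_norm_tendsto_zero]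
  exact squeeze_zero (fun n => norm_nonneg _) hC tendsto_bound

/-- The core sufficiency argument: coefficient bounds imply 1-Lipschitz. -/
lemma lipschitz_of_bound (C : ℕ → ℤ_[p])
    (hC : ∀ m, ‖C m‖ ≤ (p : ℝ) ^ (-(Nat.log p m : ℤ)))
    (f : ℤ_[p] → ℤ_[p]) (hf : ∀ x, f x = ∑' m, C m * vdpChi p m x)
    (a b : ℤ_[p]) : ‖f a - f b‖ ≤ ‖a - b‖ := by
  have ht := tendsto_of_bound C hC
  have hsa := summable_term C ht a
  have hsb := summable_term C ht b
  rw [hf, hf, ← Summable.tsum_sub hsa hsb]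
  apply IsUltrametricDist.norm_tsum_le_of_forall_le_of_nonneg (norm_nonneg _)
  intro m
  by_cases hab : vdpChi p m a = vdpChi p m b
  · simp [hab]
  · have hgt : ¬ ‖a - b‖ ≤ (p : ℝ) ^ (-((Nat.log p m : ℤ) + 1)) :=
      fun h => hab (chi_eq_of_close m h)
    have hge : (p : ℝ) ^ (-(Nat.log p m : ℤ)) ≤ ‖a - b‖ := by
      by_contra hlt
      push_neg at hlt
      rw [PadicInt.norm_lt_pow_iff_norm_le_pow_sub_one] at hlt
      exact hgt (by rwa [show -(Nat.log p m : ℤ) - 1 = -((Nat.log p m : ℤ) + 1) by ring] at hlt)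
    calc ‖C m * vdpChi p m a - C m * vdpChi p m b‖
        = ‖C m * (vdpChi p m a - vdpChi p m b)‖ := by ring_nf
    _ = ‖C m‖ * ‖vdpChi p m a - vdpChi p m b‖ := norm_mul _ _
    _ ≤ ‖C m‖ * 1 := by gcongr; exact PadicInt.norm_le_one _
    _ ≤ _ := by rw [mul_one]; exact (hC m).trans hge

lemma chi_nat (k m : ℕ) :
    vdpChi p k (m : ℤ_[p]) =
      if ((p : ℤ) ^ (Nat.log p k + 1)) ∣ ((m : ℤ) - k) then 1 else 0 := by
  unfold vdpChi
  congr 1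
  apply propext
  rw [show ((m : ℤ_[p]) - k) = (((m : ℤ) - k : ℤ) : ℤ_[p]) by push_cast; ring,
    show (-((Nat.log p k : ℤ) + 1)) = (-(Nat.log p k + 1 : ℕ) : ℤ) by push_cast; ring]
  exact PadicInt.norm_int_le_pow_iff_dvd

lemma chi_self (m : ℕ) : vdpChi p m (m : ℤ_[p]) = 1 := by
  unfold vdpChi
  rw [if_pos]
  rw [sub_self, norm_zero]
  positivity

lemma chi_truncation (m k : ℕ) (hm0 : m ≠ 0) (hs : 1 ≤ Nat.log p m) (hk : k ≠ m) :
    vdpChi p k (m : ℤ_[p]) = vdpChi p k ((m % p ^ Nat.log p m : ℕ) : ℤ_[p]) := by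
  have hp1 : 1 < p := hp.out.one_lt
  set s := Nat.log p m with hs_def
  set m' := m % p ^ s with hm'_def
  set t := Nat.log p k with ht_def
  have hppos : 0 < p ^ s := pow_pos (by omega) s
  have hz : (p : ℤ) ^ s * ((m / p ^ s : ℕ) : ℤ) + ((m' : ℕ) : ℤ) = (m : ℤ) := by
    exact_mod_cast Nat.div_add_mod m (p ^ s)
  have hmm' : (m : ℤ) - m' = (p : ℤ) ^ s * ((m / p ^ s : ℕ) : ℤ) := by linarith
  by_cases hts : t + 1 ≤ s
  · apply chi_eq_of_close
    rw [show ((m : ℤ_[p]) - (m' : ℕ)) = (((m : ℤ) - m' : ℤ) : ℤ_[p]) by push_cast; ring,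
      show (-((t : ℤ) + 1)) = (-(t + 1 : ℕ) : ℤ) by push_cast; ring]
    rw [PadicInt.norm_int_le_pow_iff_dvd, hmm']
    exact Dvd.dvd.mul_right (pow_dvd_pow _ hts) _
  · push_neg at hts
    have hk0 : k ≠ 0 := by
      intro h
      have : t = 0 := by rw [ht_def, h, Nat.log_zero_right]
      omega
    have hkP : k < p ^ (t + 1) := Nat.lt_pow_succ_log_self hp1 k
    have hmP : m < p ^ (s + 1) := Nat.lt_pow_succ_log_self hp1 m
    have hmP' : m < p ^ (t + 1) :=
      lt_of_lt_of_le hmP (Nat.pow_le_pow_right hp1.le (by omega))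
    have hptk : p ^ t ≤ k := Nat.pow_log_le_self p hk0
    have hm'P : m' < p ^ s := Nat.mod_lt _ hppos
    rw [chi_nat, chi_nat, if_neg, if_neg]
    · intro hdvd
      have h1 : ((m' : ℤ) - k) = 0 := by
        apply Int.eq_zero_of_abs_lt_dvd hdvd
        have c1 : (m' : ℤ) < (p : ℤ) ^ (t + 1) := by
          exact_mod_cast lt_of_lt_of_le hm'P
            (Nat.pow_le_pow_right hp1.le (by omega))
        have c2 : (k : ℤ) < (p : ℤ) ^ (t + 1) := by exact_mod_cast hkP
        have c3 : (0 : ℤ) ≤ m' := Int.natCast_nonneg _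
        have c4 : (0 : ℤ) ≤ k := Int.natCast_nonneg _
        rw [abs_lt]
        constructor <;> linarith
      have hkm' : m' = k := by exact_mod_cast sub_eq_zero.mp h1
      have : p ^ s ≤ m' := hkm' ▸ le_trans (Nat.pow_le_pow_right hp1.le (by omega)) hptk
      omega
    · intro hdvd
      have h1 : ((m : ℤ) - k) = 0 := by
        apply Int.eq_zero_of_abs_lt_dvd hdvd
        have c1 : (m : ℤ) < (p : ℤ) ^ (t + 1) := by exact_mod_cast hmP'
        have c2 : (k : ℤ) < (p : ℤ) ^ (t + 1) := by exact_mod_cast hkP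
        have c3 : (0 : ℤ) ≤ (m : ℤ) := Int.natCast_nonneg _
        have c4 : (0 : ℤ) ≤ k := Int.natCast_nonneg _
        rw [abs_lt]
        constructor <;> linarith
      have hmk : (m : ℤ) = k := sub_eq_zero.mp h1
      exact hk (by exact_mod_cast hmk.symm)

lemma chi_at_trunc (m : ℕ) (hm0 : m ≠ 0) :
    vdpChi p m ((m % p ^ Nat.log p m : ℕ) : ℤ_[p]) = 0 := by
  have hp1 : 1 < p := hp.out.one_lt
  set s := Nat.log p m with hs_def
  have hppos : 0 < p ^ s := pow_pos (by omega) s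
  have hz : (p : ℤ) ^ s * ((m / p ^ s : ℕ) : ℤ) + ((m % p ^ s : ℕ) : ℤ) = (m : ℤ) := by
    exact_mod_cast Nat.div_add_mod m (p ^ s)
  rw [chi_nat, if_neg]
  intro hdvd
  have hdm : (((m % p ^ s : ℕ) : ℤ) - m) = -((p : ℤ) ^ s * ((m / p ^ s : ℕ) : ℤ)) := by
    linarith
  rw [hdm, dvd_neg, pow_succ] at hdvd
  have hpd : (p : ℤ) ∣ ((m / p ^ s : ℕ) : ℤ) :=
    (mul_dvd_mul_iff_left (a := (p : ℤ) ^ s) (by positivity)).mp hdvd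
  have hpd' : p ∣ m / p ^ s := by exact_mod_cast hpd
  have hd1 : 1 ≤ m / p ^ s :=
    (Nat.one_le_div_iff hppos).mpr (Nat.pow_log_le_self p hm0)
  have hd2 : m / p ^ s < p := by
    apply Nat.div_lt_of_lt_mul
    calc m < p ^ (s + 1) := Nat.lt_pow_succ_log_self hp1 m
    _ = p ^ s * p := pow_succ p s
  have := Nat.le_of_dvd (by omega) hpd'
  omega

/-- Extraction of a van der Put coefficient: `B m = f m - f (m % p^{log m})`. -/
lemma coeff_eq (B : ℕ → ℤ_[p]) (hB : Tendsto B atTop (nhds 0))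
    (f : ℤ_[p] → ℤ_[p]) (hf : ∀ x, f x = ∑' m, B m * vdpChi p m x)
    (m : ℕ) (hm0 : m ≠ 0) (hs : 1 ≤ Nat.log p m) :
    f m - f ((m % p ^ Nat.log p m : ℕ) : ℤ_[p]) = B m := by
  rw [hf, hf, ← Summable.tsum_sub (summable_term B hB _) (summable_term B hB _)]
  rw [tsum_eq_single m (fun k hkm => by
    rw [← chi_truncation m k hm0 hs hkm, sub_self])]
  rw [chi_self, chi_at_trunc m hm0, mul_one, mul_zero, sub_zero]

end VdpAux

/-- **Compatibility criterion in terms of van der Put coefficients.** A continuous function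
`f : ℤ_p → ℤ_p` with van der Put series `f x = Σ' m, B m · χ(m,x)` (with `B m → 0`
p-adically) is 1-Lipschitz (compatible) if and only if `‖B m‖ ≤ p^{-⌊log_p m⌋}` for all `m`;
equivalently, if and only if `f` can be represented as
`f x = Σ' m, p^{⌊log_p m⌋}·b_m·χ(m,x)` for suitable `b_m ∈ ℤ_p`. -/
theorem vdp_compatibility_criterion
    (p : ℕ) [Fact p.Prime]
    (B : ℕ → ℤ_[p]) (hB : Tendsto B atTop (nhds 0))
    (f : ℤ_[p] → ℤ_[p]) (hf : ∀ x : ℤ_[p], f x = ∑' m : ℕ, B m * vdpChi p m x) :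
    ((∀ a b : ℤ_[p], ‖f a - f b‖ ≤ ‖a - b‖) ↔
        ∀ m : ℕ, ‖B m‖ ≤ (p : ℝ) ^ (-(Nat.log p m : ℤ))) ∧
    ((∀ a b : ℤ_[p], ‖f a - f b‖ ≤ ‖a - b‖) ↔
        ∃ b : ℕ → ℤ_[p], ∀ x : ℤ_[p],
          f x = ∑' m : ℕ, (p : ℤ_[p]) ^ (Nat.log p m) * b m * vdpChi p m x) := by
  have hp1 : 1 < p := (Fact.out : p.Prime).one_lt
  have main : (∀ a b : ℤ_[p], ‖f a - f b‖ ≤ ‖a - b‖) ↔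
      ∀ m : ℕ, ‖B m‖ ≤ (p : ℝ) ^ (-(Nat.log p m : ℤ)) := by
    constructor
    · intro h m
      by_cases hs : Nat.log p m = 0
      · rw [hs]
        simpa using PadicInt.norm_le_one _
      · have hm0 : m ≠ 0 := by
          intro h0
          rw [h0, Nat.log_zero_right] at hs
          exact hs rfl
        rw [← VdpAux.coeff_eq B hB f hf m hm0 (by omega)]
        refine (h _ _).trans ?_
        set s := Nat.log p m with hs_def
        have hppos : 0 < p ^ s := pow_pos (by omega) s
        have hz : (p : ℤ) ^ s * ((m / p ^ s : ℕ) : ℤ) + ((m % p ^ s : ℕ) : ℤ) = (m : ℤ) := by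
          exact_mod_cast Nat.div_add_mod m (p ^ s)
        generalize hq : m % p ^ s = q at hz ⊢
        generalize hd : m / p ^ s = d at hz
        rw [show ((m : ℤ_[p]) - ((q : ℕ) : ℤ_[p]))
              = (((m : ℤ) - (q : ℕ) : ℤ) : ℤ_[p]) by push_cast; ring,
          show (-(s : ℤ)) = (-(s : ℕ) : ℤ) by norm_num,
          PadicInt.norm_int_le_pow_iff_dvd]
        exact ⟨((d : ℕ) : ℤ), by linarith⟩
    · intro h
      exact VdpAux.lipschitz_of_bound B h f hf
  refine ⟨main, ?_, ?_⟩
  · intro hlip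
    have h := main.mp hlip
    have hdvd : ∀ m : ℕ, ((p : ℤ_[p]) ^ Nat.log p m) ∣ B m := by
      intro m
      rw [← Ideal.mem_span_singleton, ← PadicInt.norm_le_pow_iff_mem_span_pow]
      exact h m
    choose b hb using hdvd
    refine ⟨b, fun x => ?_⟩
    rw [hf x]
    exact tsum_congr fun m => by rw [hb m]
  · rintro ⟨b, hrep⟩
    apply VdpAux.lipschitz_of_bound (fun m => (p : ℤ_[p]) ^ (Nat.log p m) * b m) ?_ f hrep
    intro m
    calc ‖(p : ℤ_[p]) ^ (Nat.log p m) * b m‖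
        = ‖(p : ℤ_[p]) ^ (Nat.log p m)‖ * ‖b m‖ := norm_mul _ _
    _ ≤ ‖(p : ℤ_[p]) ^ (Nat.log p m)‖ * 1 := by gcongr; exact PadicInt.norm_le_one _
    _ = (p : ℝ) ^ (-(Nat.log p m : ℤ)) := by rw [mul_one, PadicInt.norm_p_pow]
end
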